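/- arXiv:2403.02190 — 5 statements merged into one kernel-verified Lean document; each statement's English description precedes it below -/
import Mathlib

section
/- Let q0, q1 : ℝ^n → ℝ be quadratic functions q_i(x) = xᵀ P_i x + 2 g_iᵀ x + s_i (with P_i symmetric, g_i ∈ ℝ^n, s_i ∈ ℝ for i = 0,1), and suppose there exists a point x̄ ∈ ℝ^n with q1(x̄) < 0. Then the following are equivalent: (i) for all x ∈ ℝ^n, q1(x) ≤ 0 implies q0(x) ≤ 0; (ii) there exists λ ≥ 0 such that the block matrix λ·[[P1, g1],[g1ᵀ, s1]] − [[P0, g0],[g0ᵀ, s0]] is positive semidefinite. -/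
open Matrix

noncomputable section

section Aux

variable {ι : Type*} [Fintype ι]

private lemma qf_smul' (A : Matrix ι ι ℝ) (c : ℝ) (z : ι → ℝ) :
    (c • z) ⬝ᵥ A *ᵥ (c • z) = c ^ 2 * (z ⬝ᵥ A *ᵥ z) := by
  simp [Matrix.mulVec_smul, dotProduct_smul, smul_dotProduct, smul_eq_mul]
  ring

private lemma qf_combo' (A : Matrix ι ι ℝ) (c d : ℝ) (x y : ι → ℝ) :
    (c • x + d • y) ⬝ᵥ A *ᵥ (c • x + d • y)
      = c ^ 2 * (x ⬝ᵥ A *ᵥ x) + d ^ 2 * (y ⬝ᵥ A *ᵥ y)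
        + c * d * (x ⬝ᵥ A *ᵥ y + y ⬝ᵥ A *ᵥ x) := by
  simp [Matrix.mulVec_add, Matrix.mulVec_smul, dotProduct_add, add_dotProduct,
    dotProduct_smul, smul_dotProduct, smul_eq_mul]
  ring

private lemma qf_cone' (A B : Matrix ι ι ℝ) (z : ι → ℝ) (k : ℝ) (hk : 0 ≤ k) :
    ∃ w : ι → ℝ, w ⬝ᵥ A *ᵥ w = k * (z ⬝ᵥ A *ᵥ z) ∧ w ⬝ᵥ B *ᵥ w = k * (z ⬝ᵥ B *ᵥ z) := by
  refine ⟨Real.sqrt k • z, ?_, ?_⟩ <;> rw [qf_smul', Real.sq_sqrt hk]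

private lemma dines_aux' (A B : Matrix ι ι ℝ) (z1 z2 : ι → ℝ) (θ : ℝ) (hθ0 : 0 ≤ θ) (hθ1 : θ ≤ 1)
    (hd : 0 < (z1 ⬝ᵥ A *ᵥ z1) * (z2 ⬝ᵥ B *ᵥ z2) - (z1 ⬝ᵥ B *ᵥ z1) * (z2 ⬝ᵥ A *ᵥ z2)) :
    ∃ z : ι → ℝ,
      z ⬝ᵥ A *ᵥ z = θ * (z1 ⬝ᵥ A *ᵥ z1) + (1 - θ) * (z2 ⬝ᵥ A *ᵥ z2) ∧
      z ⬝ᵥ B *ᵥ z = θ * (z1 ⬝ᵥ B *ᵥ z1) + (1 - θ) * (z2 ⬝ᵥ B *ᵥ z2) := by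
  set a1 := z1 ⬝ᵥ A *ᵥ z1 with ha1
  set b1 := z1 ⬝ᵥ B *ᵥ z1 with hb1
  set a2 := z2 ⬝ᵥ A *ᵥ z2 with ha2
  set b2 := z2 ⬝ᵥ B *ᵥ z2 with hb2
  set d := a1 * b2 - b1 * a2 with hdd
  obtain ⟨w2, hw2A, hw2B, hcr⟩ :
      ∃ w2 : ι → ℝ, w2 ⬝ᵥ A *ᵥ w2 = a2 ∧ w2 ⬝ᵥ B *ᵥ w2 = b2 ∧
        0 ≤ (b2 - b1) * (z1 ⬝ᵥ A *ᵥ w2 + w2 ⬝ᵥ A *ᵥ z1)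
            + (a1 - a2) * (z1 ⬝ᵥ B *ᵥ w2 + w2 ⬝ᵥ B *ᵥ z1) := by
    by_cases hs : 0 ≤ (b2 - b1) * (z1 ⬝ᵥ A *ᵥ z2 + z2 ⬝ᵥ A *ᵥ z1)
        + (a1 - a2) * (z1 ⬝ᵥ B *ᵥ z2 + z2 ⬝ᵥ B *ᵥ z1)
    · exact ⟨z2, rfl, rfl, hs⟩
    · refine ⟨-z2, ?_, ?_, ?_⟩
      · simp [Matrix.mulVec_neg, dotProduct_neg, neg_dotProduct, ha2]
      · simp [Matrix.mulVec_neg, dotProduct_neg, neg_dotProduct, hb2]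
      · simp only [Matrix.mulVec_neg, dotProduct_neg, neg_dotProduct]
        push_neg at hs
        nlinarith [hs]
  set cA := z1 ⬝ᵥ A *ᵥ w2 + w2 ⬝ᵥ A *ᵥ z1 with hcA
  set cB := z1 ⬝ᵥ B *ᵥ w2 + w2 ⬝ᵥ B *ᵥ z1 with hcB
  set e := (b2 - b1) * cA + (a1 - a2) * cB with he
  set fA : ℝ → ℝ := fun t => (1 - t) ^ 2 * a1 + t ^ 2 * a2 + (1 - t) * t * cA with hfA
  set fB : ℝ → ℝ := fun t => (1 - t) ^ 2 * b1 + t ^ 2 * b2 + (1 - t) * t * cB with hfB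
  have hpath : ∀ t : ℝ,
      ((1 - t) • z1 + t • w2) ⬝ᵥ A *ᵥ ((1 - t) • z1 + t • w2) = fA t ∧
      ((1 - t) • z1 + t • w2) ⬝ᵥ B *ᵥ ((1 - t) • z1 + t • w2) = fB t := by
    intro t
    constructor
    · rw [qf_combo']; simp only [hfA, hw2A]; try ring
    · rw [qf_combo']; simp only [hfB, hw2B]; try ring
  set sf : ℝ → ℝ := fun t => (b2 - b1) * fA t + (a1 - a2) * fB t with hsf
  have hsfval : ∀ t : ℝ, sf t = d * ((1 - t) ^ 2 + t ^ 2) + (1 - t) * t * e := by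
    intro t; simp only [hsf, hfA, hfB, he, hdd]; ring
  have hsfpos : ∀ t ∈ Set.Icc (0:ℝ) 1, 0 < sf t := by
    intro t ht
    rw [hsfval]
    have h1 : 0 ≤ (1 - t) * t := mul_nonneg (by linarith [ht.2]) ht.1
    nlinarith [sq_nonneg (1 - 2*t), mul_nonneg h1 hcr]
  set num : ℝ → ℝ := fun t => b2 * fA t - a2 * fB t with hnum
  set g : ℝ → ℝ := fun t => num t / sf t with hg
  have hg0 : g 0 = 1 := by
    simp only [hg, hnum, hsf, hfA, hfB]
    norm_num
    rw [div_eq_one_iff_eq] <;> [skip; intro h] <;> nlinarith [hd]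
  have hg1 : g 1 = 0 := by
    simp only [hg, hnum, hfA, hfB]
    norm_num
    ring_nf
    simp
  have hcont : ContinuousOn g (Set.Icc 0 1) := by
    apply ContinuousOn.div
    · fun_prop
    · fun_prop
    · exact fun t ht => ne_of_gt (hsfpos t ht)
  have hmem : θ ∈ Set.Icc (g 1) (g 0) := by rw [hg0, hg1]; exact ⟨hθ0, hθ1⟩
  obtain ⟨t0, ht0, hgt0⟩ := intermediate_value_Icc' (by norm_num : (0:ℝ) ≤ 1) hcont hmem
  have hspos := hsfpos t0 ht0
  have E2 : b2 * fA t0 - a2 * fB t0 = θ * sf t0 := by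
    have : num t0 / sf t0 = θ := hgt0
    rw [div_eq_iff (ne_of_gt hspos)] at this
    simpa [hnum] using this.trans (mul_comm θ (sf t0) ▸ rfl)
  have E1 : (b2 - b1) * fA t0 + (a1 - a2) * fB t0 = sf t0 := rfl
  have keyA : d * fA t0 = sf t0 * (θ * a1 + (1 - θ) * a2) := by
    simp only [hdd]
    linear_combination (a1 - a2) * E2 + a2 * E1
  have keyB : d * fB t0 = sf t0 * (θ * b1 + (1 - θ) * b2) := by
    simp only [hdd]
    linear_combination (b1 - b2) * E2 + b2 * E1
  obtain ⟨w, hwA, hwB⟩ := qf_cone' A B ((1 - t0) • z1 + t0 • w2) (d / sf t0)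
    (le_of_lt (div_pos hd hspos))
  refine ⟨w, ?_, ?_⟩
  · rw [hwA, (hpath t0).1, div_mul_eq_mul_div, div_eq_iff (ne_of_gt hspos)]
    linarith [keyA]
  · rw [hwB, (hpath t0).2, div_mul_eq_mul_div, div_eq_iff (ne_of_gt hspos)]
    linarith [keyB]

/-- **Dines' theorem**: the joint range of two quadratic forms is convex. -/
private lemma dines' (A B : Matrix ι ι ℝ) (z1 z2 : ι → ℝ) (θ : ℝ) (hθ0 : 0 ≤ θ) (hθ1 : θ ≤ 1) :
    ∃ z : ι → ℝ,
      z ⬝ᵥ A *ᵥ z = θ * (z1 ⬝ᵥ A *ᵥ z1) + (1 - θ) * (z2 ⬝ᵥ A *ᵥ z2) ∧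
      z ⬝ᵥ B *ᵥ z = θ * (z1 ⬝ᵥ B *ᵥ z1) + (1 - θ) * (z2 ⬝ᵥ B *ᵥ z2) := by
  set a1 := z1 ⬝ᵥ A *ᵥ z1 with ha1
  set b1 := z1 ⬝ᵥ B *ᵥ z1 with hb1
  set a2 := z2 ⬝ᵥ A *ᵥ z2 with ha2
  set b2 := z2 ⬝ᵥ B *ᵥ z2 with hb2
  rcases lt_trichotomy (a1 * b2 - b1 * a2) 0 with hd | hd | hd
  · obtain ⟨z, hB, hA⟩ := dines_aux' B A z1 z2 θ hθ0 hθ1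
      (by rw [← ha1, ← hb1, ← ha2, ← hb2]; linarith)
    exact ⟨z, hA, hB⟩
  · by_cases h1 : a1 = 0 ∧ b1 = 0
    · obtain ⟨w, hwA, hwB⟩ := qf_cone' A B z2 (1 - θ) (by linarith)
      exact ⟨w, by rw [hwA, h1.1]; ring, by rw [hwB, h1.2]; ring⟩
    · have hc : ∃ c : ℝ, a2 = c * a1 ∧ b2 = c * b1 := by
        by_cases ha : a1 = 0
        · have hb : b1 ≠ 0 := fun hb => h1 ⟨ha, hb⟩
          have ha2' : a2 = 0 := by
            have hba : b1 * a2 = 0 := by linear_combination (-1 : ℝ) * hd + b2 * ha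
            rcases mul_eq_zero.mp hba with h | h
            · exact absurd h hb
            · exact h
          exact ⟨b2 / b1, by rw [ha2', ha]; ring, by field_simp⟩
        · refine ⟨a2 / a1, by rw [div_mul_cancel₀ _ ha], ?_⟩
          rw [div_mul_eq_mul_div, eq_div_iff ha]
          linear_combination hd
      obtain ⟨c, hca, hcb⟩ := hc
      by_cases hk0 : 0 ≤ θ + (1 - θ) * c
      · obtain ⟨w, hwA, hwB⟩ := qf_cone' A B z1 (θ + (1 - θ) * c) hk0
        exact ⟨w, by rw [hwA, hca]; ring, by rw [hwB, hcb]; ring⟩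
      · push_neg at hk0
        have hc0 : c < 0 := by nlinarith
        obtain ⟨w, hwA, hwB⟩ := qf_cone' A B z2 ((θ + (1 - θ) * c) / c)
          (le_of_lt (div_pos_of_neg_of_neg hk0 hc0))
        refine ⟨w, ?_, ?_⟩
        · rw [hwA, ← ha2, hca, div_mul_eq_mul_div, div_eq_iff (ne_of_lt hc0)]
          ring
        · rw [hwB, ← hb2, hcb, div_mul_eq_mul_div, div_eq_iff (ne_of_lt hc0)]
          ring
  · exact dines_aux' A B z1 z2 θ hθ0 hθ1 hd

/-- homogeneous S-lemma -/
private lemma homog_s_lemma' (A B : Matrix ι ι ℝ) (zb : ι → ℝ) (hzb : zb ⬝ᵥ B *ᵥ zb < 0)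
    (h : ∀ z : ι → ℝ, z ⬝ᵥ B *ᵥ z ≤ 0 → z ⬝ᵥ A *ᵥ z ≤ 0) :
    ∃ lam : ℝ, 0 ≤ lam ∧ ∀ z : ι → ℝ, 0 ≤ lam * (z ⬝ᵥ B *ᵥ z) - (z ⬝ᵥ A *ᵥ z) := by
  classical
  set W : Set (ℝ × ℝ) := {p | ∃ z : ι → ℝ, p = (z ⬝ᵥ A *ᵥ z, z ⬝ᵥ B *ᵥ z)} with hW
  set C : Set (ℝ × ℝ) := {p | 0 < p.1} ∩ {p | p.2 < 0} with hC
  have hWconv : Convex ℝ W := by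
    rintro p ⟨z1, rfl⟩ q ⟨z2, rfl⟩ s t hs ht hst
    obtain ⟨z, hzA, hzB⟩ := dines' A B z1 z2 s hs (by linarith)
    refine ⟨z, ?_⟩
    have ht' : t = 1 - s := by linarith
    subst ht'
    ext <;> simp [hzA, hzB, mul_comm]
  have hCconv : Convex ℝ C := by
    rintro p ⟨hp1, hp2⟩ q ⟨hq1, hq2⟩ s t hs ht hst
    have hp1' : (0:ℝ) < p.1 := hp1
    have hp2' : (p.2:ℝ) < 0 := hp2
    have hq1' : (0:ℝ) < q.1 := hq1
    have hq2' : (q.2:ℝ) < 0 := hq2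
    constructor
    · show (0:ℝ) < s * p.1 + t * q.1
      rcases eq_or_lt_of_le hs with hs0 | hs0
      · have ht1 : t = 1 := by linarith
        rw [← hs0, ht1]; simpa using hq1'
      · linarith [mul_pos hs0 hp1', mul_nonneg ht hq1'.le]
    · show (s * p.2 + t * q.2 : ℝ) < 0
      rcases eq_or_lt_of_le hs with hs0 | hs0
      · have ht1 : t = 1 := by linarith
        rw [← hs0, ht1]; simpa using hq2'
      · have h1 : 0 < s * (-p.2) := mul_pos hs0 (by linarith)
        have h2 : 0 ≤ t * (-q.2) := mul_nonneg ht (by linarith)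
        nlinarith [h1, h2]
  have hCopen : IsOpen C :=
    (isOpen_lt continuous_const continuous_fst).inter (isOpen_lt continuous_snd continuous_const)
  have hdisj : Disjoint C W := by
    rw [Set.disjoint_left]
    rintro p ⟨hp1, hp2⟩ ⟨z, rfl⟩
    exact absurd (h z (le_of_lt hp2)) (not_le.mpr hp1)
  obtain ⟨f, u, hfC, hfW⟩ := geometric_hahn_banach_open hCconv hCopen hWconv hdisj
  set a := f (1, 0) with ha
  set b := f (0, 1) with hb
  have hf : ∀ p : ℝ × ℝ, f p = p.1 * a + p.2 * b := by
    intro p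
    have hp : p = p.1 • ((1:ℝ), (0:ℝ)) + p.2 • ((0:ℝ), (1:ℝ)) := by
      ext <;> simp
    rw [show f p = f (p.1 • ((1:ℝ), (0:ℝ)) + p.2 • ((0:ℝ), (1:ℝ))) from congrArg f hp,
      f.map_add, f.map_smul, f.map_smul]
    simp [smul_eq_mul, ha, hb]
  have h0W : (0, 0) ∈ W := ⟨0, by simp⟩
  have hu0 : u ≤ 0 := by
    have := hfW _ h0W
    rw [hf] at this
    simpa using this
  have hW' : ∀ z : ι → ℝ, u ≤ (z ⬝ᵥ A *ᵥ z) * a + (z ⬝ᵥ B *ᵥ z) * b := by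
    intro z
    have := hfW _ ⟨z, rfl⟩
    rwa [hf] at this
  have hWnn : ∀ z : ι → ℝ, 0 ≤ (z ⬝ᵥ A *ᵥ z) * a + (z ⬝ᵥ B *ᵥ z) * b := by
    intro z
    by_contra hS
    push_neg at hS
    set S := (z ⬝ᵥ A *ᵥ z) * a + (z ⬝ᵥ B *ᵥ z) * b with hSdef
    have hSne : S ≠ 0 := ne_of_lt hS
    set t := (|u| + 1) / (-S) with htdef
    have ht : 0 ≤ t := div_nonneg (by positivity) (by linarith)
    obtain ⟨w, hwA, hwB⟩ := qf_cone' A B z t ht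
    have h2 := hW' w
    rw [hwA, hwB] at h2
    have h3 : t * S = -(|u| + 1) := by
      rw [htdef, div_mul_eq_mul_div, div_eq_iff (neg_ne_zero.mpr hSne)]
      ring
    have h4 : t * (z ⬝ᵥ A *ᵥ z) * a + t * (z ⬝ᵥ B *ᵥ z) * b = t * S := by
      rw [hSdef]; ring
    have h5 : -|u| ≤ u := neg_abs_le u
    nlinarith [h2, h3, h4]
  have hab : a < u + b := by
    have := hfC (1, -1) ⟨by norm_num, by norm_num⟩
    rw [hf] at this
    simp at this
    linarith
  have ha_np : a ≤ 0 := by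
    by_contra hapos
    push_neg at hapos
    set p1 := max ((u + b) / a + 1) 1 with hp1def
    have hp1pos : (0:ℝ) < p1 := lt_of_lt_of_le one_pos (le_max_right _ _)
    have hle := hfC (p1, -1) ⟨hp1pos, by norm_num⟩
    rw [hf] at hle
    simp only at hle
    have h1 : (u + b) / a + 1 ≤ p1 := le_max_left _ _
    have h2 : (u + b) / a * a = u + b := div_mul_cancel₀ _ (ne_of_gt hapos)
    nlinarith [hle, h1, h2]
  have hb_nn : 0 ≤ b := by
    by_contra hbneg
    push_neg at hbneg
    set p2 := min ((u - a) / b - 1) (-1) with hp2def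
    have hp2neg : p2 < 0 := lt_of_le_of_lt (min_le_right _ _) (by norm_num)
    have hle := hfC (1, p2) ⟨by norm_num, hp2neg⟩
    rw [hf] at hle
    simp only at hle
    have h1 : p2 ≤ (u - a) / b - 1 := min_le_left _ _
    have h2 : (u - a) / b * b = u - a := div_mul_cancel₀ _ (ne_of_lt hbneg)
    nlinarith [hle, h1, h2]
  rcases eq_or_lt_of_le ha_np with haz | haneg
  · exfalso
    have hbpos : 0 < b := by linarith
    have h6 := hWnn zb
    rw [haz] at h6
    nlinarith [mul_pos (neg_pos.mpr hzb) hbpos]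
  · refine ⟨b / (-a), div_nonneg hb_nn (by linarith), fun z => ?_⟩
    have hna : (0:ℝ) < -a := by linarith
    rw [div_mul_eq_mul_div, sub_nonneg, le_div_iff₀ hna]
    linarith [hWnn z]

end Aux

private lemma homog_eval' {n : ℕ} (P : Matrix (Fin n) (Fin n) ℝ) (g : Fin n → ℝ) (s : ℝ)
    (x : Fin n → ℝ) (t : ℝ) :
    Sum.elim x (fun _ => t) ⬝ᵥ
      (fromBlocks P (Matrix.of fun i (_ : Fin 1) => g i) (Matrix.of fun (_ : Fin 1) j => g j)
        (Matrix.of fun (_ : Fin 1) (_ : Fin 1) => s)) *ᵥ Sum.elim x (fun _ => t)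
      = x ⬝ᵥ P *ᵥ x + 2 * t * (g ⬝ᵥ x) + s * t ^ 2 := by
  have h1 : (Sum.elim x (fun _ : Fin 1 => t)) ∘ Sum.inl = x := rfl
  have h2 : (Sum.elim x (fun _ : Fin 1 => t)) ∘ Sum.inr = (fun _ => t) := rfl
  rw [fromBlocks_mulVec, h1, h2, sumElim_dotProduct_sumElim]
  simp [dotProduct_add, Matrix.mulVec, dotProduct, Fin.sum_univ_one,
    Finset.mul_sum, Finset.sum_add_distrib, mul_add, add_mul]
  have h3 : ∑ i : Fin n, x i * (g i * t) = ∑ i : Fin n, t * (g i * x i) := by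
    apply Finset.sum_congr rfl; intros; ring
  have h4 : ∑ i : Fin n, 2 * t * (g i * x i)
      = ∑ i : Fin n, t * (g i * x i) + ∑ i : Fin n, t * (g i * x i) := by
    rw [← Finset.sum_add_distrib]
    apply Finset.sum_congr rfl; intros; ring
  rw [h3, h4]
  ring

private lemma vec_decomp' {n : ℕ} (z : Fin n ⊕ Fin 1 → ℝ) :
    z = Sum.elim (z ∘ Sum.inl) (fun _ => z (Sum.inr 0)) := by
  funext i
  cases i with
  | inl i => rfl
  | inr j => rw [Sum.elim_inr, Fin.eq_zero j]

private lemma quad_ev_pos' (p c d : ℝ) (hp : 0 < p) :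
    ∃ R : ℝ, 1 ≤ R ∧ ∀ r : ℝ, R ≤ |r| → 0 < p * r ^ 2 + c * r + d := by
  refine ⟨max 1 ((|c| + |d| + 1) / p), le_max_left _ _, fun r hr => ?_⟩
  have h1 : 1 ≤ |r| := le_trans (le_max_left _ _) hr
  have h2 : (|c| + |d| + 1) / p ≤ |r| := le_trans (le_max_right _ _) hr
  have h3 : |c| + |d| + 1 ≤ p * |r| := by
    rw [div_le_iff₀ hp] at h2; linarith [h2]
  have h4 : -(|c| * |r|) ≤ c * r := by
    rw [← abs_mul]; exact neg_abs_le _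
  have h5 : -|d| ≤ d := neg_abs_le d
  have h6 : |r| * |r| = r ^ 2 := by rw [← abs_mul, abs_mul_self]; ring
  nlinarith [abs_nonneg c, abs_nonneg d, abs_nonneg r, mul_le_mul_of_nonneg_right h3 (abs_nonneg r)]

private lemma fromBlocks_herm' {n : ℕ} (P : Matrix (Fin n) (Fin n) ℝ) (g : Fin n → ℝ) (s : ℝ)
    (hP : P.IsSymm) :
    (fromBlocks P (Matrix.of fun i (_ : Fin 1) => g i) (Matrix.of fun (_ : Fin 1) j => g j)
        (Matrix.of fun (_ : Fin 1) (_ : Fin 1) => s)).IsHermitian := by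
  rw [Matrix.IsHermitian, conjTranspose_eq_transpose_of_trivial]
  exact Matrix.isSymm_fromBlocks_iff.mpr ⟨hP, rfl, rfl, rfl⟩

/-- **S-procedure** (lossless case, single quadratic constraint with a Slater point):
for quadratic functions `q i (x) = xᵀ Pᵢ x + 2 gᵢᵀ x + sᵢ` with a point where `q1` is
negative, `q1 x ≤ 0 → q0 x ≤ 0` holds for all `x` iff there is `λ ≥ 0` such that
`λ·[[P1,g1],[g1ᵀ,s1]] − [[P0,g0],[g0ᵀ,s0]] ⪰ 0`. -/
theorem s_procedure {n : ℕ}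
    (P0 P1 : Matrix (Fin n) (Fin n) ℝ) (g0 g1 : Fin n → ℝ) (s0 s1 : ℝ)
    (hP0 : P0.IsSymm) (hP1 : P1.IsSymm)
    (q0 q1 : (Fin n → ℝ) → ℝ)
    (hq0 : ∀ x, q0 x = x ⬝ᵥ P0.mulVec x + 2 * (g0 ⬝ᵥ x) + s0)
    (hq1 : ∀ x, q1 x = x ⬝ᵥ P1.mulVec x + 2 * (g1 ⬝ᵥ x) + s1)
    (hslater : ∃ xb : Fin n → ℝ, q1 xb < 0) :
    (∀ x, q1 x ≤ 0 → q0 x ≤ 0) ↔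
      ∃ lam : ℝ, 0 ≤ lam ∧
        (lam • fromBlocks P1 (Matrix.of fun i (_ : Fin 1) => g1 i)
            (Matrix.of fun (_ : Fin 1) j => g1 j) (Matrix.of fun (_ : Fin 1) (_ : Fin 1) => s1)
          - fromBlocks P0 (Matrix.of fun i (_ : Fin 1) => g0 i)
            (Matrix.of fun (_ : Fin 1) j => g0 j)
            (Matrix.of fun (_ : Fin 1) (_ : Fin 1) => s0)).PosSemidef := by
  obtain ⟨xb, hxb⟩ := hslater
  have hxb' : xb ⬝ᵥ P1 *ᵥ xb + 2 * (g1 ⬝ᵥ xb) + s1 < 0 := by rwa [hq1] at hxb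
  constructor
  · intro hi
    -- the homogenized implication
    have himp : ∀ z : Fin n ⊕ Fin 1 → ℝ,
        z ⬝ᵥ (fromBlocks P1 (Matrix.of fun i (_ : Fin 1) => g1 i)
            (Matrix.of fun (_ : Fin 1) j => g1 j)
            (Matrix.of fun (_ : Fin 1) (_ : Fin 1) => s1)) *ᵥ z ≤ 0 →
        z ⬝ᵥ (fromBlocks P0 (Matrix.of fun i (_ : Fin 1) => g0 i)
            (Matrix.of fun (_ : Fin 1) j => g0 j)
            (Matrix.of fun (_ : Fin 1) (_ : Fin 1) => s0)) *ᵥ z ≤ 0 := by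
      intro z hz
      rw [vec_decomp' z] at hz ⊢
      set x := z ∘ Sum.inl with hx
      set t := z (Sum.inr 0) with htd
      rw [homog_eval'] at hz ⊢
      by_cases ht : t = 0
      · -- recession directions
        rw [ht] at hz ⊢
        simp only [mul_zero, zero_mul, ne_eq, OfNat.ofNat_ne_zero, not_false_eq_true,
          zero_pow, add_zero, mul_comm] at hz ⊢
        have hp1 : x ⬝ᵥ P1 *ᵥ x ≤ 0 := by linarith [hz]
        by_contra hp0'
        push_neg at hp0'
        have hp0 : 0 < x ⬝ᵥ P0 *ᵥ x := by linarith [hp0']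
        -- evaluate q i along the ray xb + r • x
        have hev0 : ∀ r : ℝ, q0 (xb + r • x)
            = (x ⬝ᵥ P0 *ᵥ x) * r ^ 2
              + (xb ⬝ᵥ P0 *ᵥ x + x ⬝ᵥ P0 *ᵥ xb + 2 * (g0 ⬝ᵥ x)) * r + q0 xb := by
          intro r
          rw [hq0, hq0]
          have : xb + r • x = (1:ℝ) • xb + r • x := by rw [one_smul]
          rw [this, qf_combo']
          simp [dotProduct_add, dotProduct_smul, smul_eq_mul]
          ring
        have hev1 : ∀ r : ℝ, q1 (xb + r • x)
            = (x ⬝ᵥ P1 *ᵥ x) * r ^ 2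
              + (xb ⬝ᵥ P1 *ᵥ x + x ⬝ᵥ P1 *ᵥ xb + 2 * (g1 ⬝ᵥ x)) * r + q1 xb := by
          intro r
          rw [hq1, hq1]
          have : xb + r • x = (1:ℝ) • xb + r • x := by rw [one_smul]
          rw [this, qf_combo']
          simp [dotProduct_add, dotProduct_smul, smul_eq_mul]
          ring
        obtain ⟨R0, hR0ge, hR0⟩ := quad_ev_pos' (x ⬝ᵥ P0 *ᵥ x)
          (xb ⬝ᵥ P0 *ᵥ x + x ⬝ᵥ P0 *ᵥ xb + 2 * (g0 ⬝ᵥ x)) (q0 xb) hp0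
        rcases eq_or_lt_of_le hp1 with hp1z | hp1neg
        · -- P1-value zero : pick sign of r according to the linear coefficient
          set c1 := xb ⬝ᵥ P1 *ᵥ x + x ⬝ᵥ P1 *ᵥ xb + 2 * (g1 ⬝ᵥ x) with hc1
          rcases le_or_gt 0 c1 with hc | hc
          · have hq1le : q1 (xb + (-R0) • x) ≤ 0 := by
              rw [hev1, ← hp1z]
              nlinarith [mul_nonneg hc (by linarith : (0:ℝ) ≤ R0)]
            have := hi _ hq1le
            rw [hev0] at this
            have hpos := hR0 (-R0) (by rw [abs_neg, abs_of_nonneg (by linarith)])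
            linarith
          · have hq1le : q1 (xb + R0 • x) ≤ 0 := by
              rw [hev1, ← hp1z]
              nlinarith [mul_pos (neg_pos.mpr hc) (by linarith : (0:ℝ) < R0)]
            have := hi _ hq1le
            rw [hev0] at this
            have hpos := hR0 R0 (by rw [abs_of_nonneg (by linarith)])
            linarith
        · obtain ⟨R1, hR1ge, hR1⟩ := quad_ev_pos' (-(x ⬝ᵥ P1 *ᵥ x))
            (-(xb ⬝ᵥ P1 *ᵥ x + x ⬝ᵥ P1 *ᵥ xb + 2 * (g1 ⬝ᵥ x))) (-(q1 xb))
            (by linarith)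
          set r := max R0 R1 with hr
          have hrnn : (0:ℝ) ≤ r := le_trans zero_le_one (le_trans hR0ge (le_max_left _ _))
          have hrabs : |r| = r := abs_of_nonneg hrnn
          have hq1le : q1 (xb + r • x) ≤ 0 := by
            have := hR1 r (by rw [hrabs]; exact le_max_right _ _)
            rw [hev1]
            nlinarith [this]
          have := hi _ hq1le
          rw [hev0] at this
          have hpos := hR0 r (by rw [hrabs]; exact le_max_left _ _)
          linarith
      · -- t ≠ 0 : rescale
        set y := t⁻¹ • x with hy
        have hq1y : q1 y = t⁻¹ ^ 2 * (x ⬝ᵥ P1 *ᵥ x + 2 * t * (g1 ⬝ᵥ x) + s1 * t ^ 2) := by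
          rw [hq1, hy, qf_smul', dotProduct_smul]
          field_simp
          linear_combination (2 * t * (g1 ⬝ᵥ x)) * mul_inv_cancel₀ ht
        have hq0y : q0 y = t⁻¹ ^ 2 * (x ⬝ᵥ P0 *ᵥ x + 2 * t * (g0 ⬝ᵥ x) + s0 * t ^ 2) := by
          rw [hq0, hy, qf_smul', dotProduct_smul]
          field_simp
          linear_combination (2 * t * (g0 ⬝ᵥ x)) * mul_inv_cancel₀ ht
        have htinv : 0 < t⁻¹ ^ 2 := by positivity
        have hq1le : q1 y ≤ 0 := by
          rw [hq1y]
          exact mul_nonpos_of_nonneg_of_nonpos htinv.le hz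
        have hq0le := hi y hq1le
        rw [hq0y] at hq0le
        nlinarith [hq0le, htinv]
    -- Slater point for the homogeneous forms
    have hzb : (Sum.elim xb (fun _ : Fin 1 => (1:ℝ))) ⬝ᵥ
        (fromBlocks P1 (Matrix.of fun i (_ : Fin 1) => g1 i)
            (Matrix.of fun (_ : Fin 1) j => g1 j)
            (Matrix.of fun (_ : Fin 1) (_ : Fin 1) => s1)) *ᵥ
        (Sum.elim xb (fun _ : Fin 1 => (1:ℝ))) < 0 := by
      rw [homog_eval']
      nlinarith [hxb']
    obtain ⟨lam, hlam, hpsd⟩ := homog_s_lemma' _ _ _ hzb himp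
    have hs1 : (fromBlocks P1 (Matrix.of fun i (_ : Fin 1) => g1 i)
        (Matrix.of fun (_ : Fin 1) j => g1 j)
        (Matrix.of fun (_ : Fin 1) (_ : Fin 1) => s1)).IsSymm :=
      Matrix.isSymm_fromBlocks_iff.mpr ⟨hP1, rfl, rfl, rfl⟩
    have hs0 : (fromBlocks P0 (Matrix.of fun i (_ : Fin 1) => g0 i)
        (Matrix.of fun (_ : Fin 1) j => g0 j)
        (Matrix.of fun (_ : Fin 1) (_ : Fin 1) => s0)).IsSymm :=
      Matrix.isSymm_fromBlocks_iff.mpr ⟨hP0, rfl, rfl, rfl⟩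
    refine ⟨lam, hlam, Matrix.posSemidef_iff_dotProduct_mulVec.mpr ⟨?_, fun z => ?_⟩⟩
    · -- hermitian
      rw [Matrix.IsHermitian, conjTranspose_eq_transpose_of_trivial, transpose_sub,
        transpose_smul, hs1.eq, hs0.eq]
    · simp only [star_trivial, Matrix.sub_mulVec, Matrix.smul_mulVec,
        dotProduct_sub, dotProduct_smul, smul_eq_mul]
      linarith [hpsd z]
  · rintro ⟨lam, hlam, hpsd⟩ x hx
    have h2 := hpsd.dotProduct_mulVec_nonneg (Sum.elim x (fun _ : Fin 1 => (1:ℝ)))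
    simp only [star_trivial, Matrix.sub_mulVec, Matrix.smul_mulVec,
      dotProduct_sub, dotProduct_smul, smul_eq_mul] at h2
    rw [homog_eval', homog_eval'] at h2
    rw [hq0]
    rw [hq1] at hx
    nlinarith [mul_nonneg hlam (neg_nonneg.mpr hx), h2]
end
end

section
/- Let f : ℝ^n × ℝ^m × ℝ^d → ℝ^n and let f̃(x,u,w) = A x + B u + E w + g be an affine map (A ∈ ℝ^{n×n}, B ∈ ℝ^{n×m}, E ∈ ℝ^{n×d}, g ∈ ℝ^n). Fix a linearization point p̄ = (x̄, ū, w̄) and a componentwise nonnegative vector L ∈ ℝ^n such that for every (x,u,w) and every component i, |f_i(x,u,w) − f̃_i(x,u,w)| ≤ (1/2) L_i (‖x − x̄‖² + ‖u − ū‖² + ‖w − w̄‖²). Let κ : ℝ^n → ℝ^m, let ξ, ξ₊ ⊆ ℝ^n, let W ⊆ ℝ^d, and let δX, δU, δW ≥ 0 satisfy: ξ ⊆ closedBall(x̄, √δX), κ(ξ) ⊆ closedBall(ū, √δU), and ‖w − w̄‖² ≤ δW for all w ∈ W. Set r² = δX + δU + δW. If for all x ∈ ξ and all w ∈ W one has {f̃(x,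 κ(x), w)} ⊕ H(0, (1/2)L r²) ⊆ ξ₊, then for all x ∈ ξ and all w ∈ W, f(x, κ(x), w) ∈ ξ₊. -/
open Matrix Set
open scoped Pointwise

noncomputable section

/-- Euclidean norm on `Fin k → ℝ`. -/
def eunorm {k : ℕ} (v : Fin k → ℝ) : ℝ := Real.sqrt (∑ i, v i ^ 2)

/-- Hyperrectangle with center `c` and half-lengths `h`. -/
def Hrect {k : ℕ} (c h : Fin k → ℝ) : Set (Fin k → ℝ) := {x | ∀ i, |x i - c i| ≤ h i}

/-- **Conservatism lemma (Lemma 1)**: if `ξ` lies in the ball of radius `√δX` around `x̄`,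
`κ(ξ)` lies in the ball of radius `√δU` around `ū`, every `w ∈ W` satisfies
`‖w − w̄‖² ≤ δW`, and the linearized image shifted by the worst-case error
hyperrectangle `H(0, (1/2)L r²)` (with `r² = δX + δU + δW`) lies in `ξ₊`, then the
true dynamics map `ξ` into `ξ₊` for every disturbance in `W`. -/
theorem conservatism_lemma {n m d : ℕ}
    (f : (Fin n → ℝ) → (Fin m → ℝ) → (Fin d → ℝ) → (Fin n → ℝ))
    (A : Matrix (Fin n) (Fin n) ℝ) (B : Matrix (Fin n) (Fin m) ℝ)
    (E : Matrix (Fin n) (Fin d) ℝ) (g : Fin n → ℝ)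
    (xbar : Fin n → ℝ) (ubar : Fin m → ℝ) (wbar : Fin d → ℝ)
    (Lv : Fin n → ℝ) (hLv : ∀ i, 0 ≤ Lv i)
    (hlin : ∀ x u w, ∀ i,
      |f x u w i - (A.mulVec x + B.mulVec u + E.mulVec w + g) i| ≤
        (1 / 2) * Lv i *
          (eunorm (x - xbar) ^ 2 + eunorm (u - ubar) ^ 2 + eunorm (w - wbar) ^ 2))
    (κ : (Fin n → ℝ) → (Fin m → ℝ))
    (ξ ξp : Set (Fin n → ℝ)) (W : Set (Fin d → ℝ))
    (δX δU δW : ℝ) (hδX : 0 ≤ δX) (hδU : 0 ≤ δU) (hδW : 0 ≤ δW)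
    (hξ : ∀ x ∈ ξ, eunorm (x - xbar) ≤ Real.sqrt δX)
    (hκ : ∀ x ∈ ξ, eunorm (κ x - ubar) ≤ Real.sqrt δU)
    (hW : ∀ w ∈ W, eunorm (w - wbar) ^ 2 ≤ δW)
    (htrans : ∀ x ∈ ξ, ∀ w ∈ W,
      {A.mulVec x + B.mulVec (κ x) + E.mulVec w + g} +
        Hrect 0 (fun i => (1 / 2) * Lv i * (δX + δU + δW)) ⊆ ξp) :
    ∀ x ∈ ξ, ∀ w ∈ W, f x (κ x) w ∈ ξp := by
  intro x hx w hw
  have hxsq : eunorm (x - xbar) ^ 2 ≤ δX := by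
    have h := hξ x hx
    have h0 : 0 ≤ eunorm (x - xbar) := Real.sqrt_nonneg _
    calc eunorm (x - xbar) ^ 2 ≤ Real.sqrt δX ^ 2 := by
          exact pow_le_pow_left₀ h0 h 2
      _ = δX := Real.sq_sqrt hδX
  have husq : eunorm (κ x - ubar) ^ 2 ≤ δU := by
    have h := hκ x hx
    have h0 : 0 ≤ eunorm (κ x - ubar) := Real.sqrt_nonneg _
    calc eunorm (κ x - ubar) ^ 2 ≤ Real.sqrt δU ^ 2 := by
          exact pow_le_pow_left₀ h0 h 2
      _ = δU := Real.sq_sqrt hδU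
  have hwsq := hW w hw
  set lin := A.mulVec x + B.mulVec (κ x) + E.mulVec w + g with hlindef
  have hmem : f x (κ x) w ∈ ({lin} : Set (Fin n → ℝ)) +
      Hrect 0 (fun i => (1 / 2) * Lv i * (δX + δU + δW)) := by
    refine ⟨lin, rfl, f x (κ x) w - lin, ?_, add_sub_cancel lin (f x (κ x) w)⟩
    intro i
    have hb := hlin x (κ x) w i
    have hL : (1 / 2) * Lv i * (eunorm (x - xbar) ^ 2 + eunorm (κ x - ubar) ^ 2 +
        eunorm (w - wbar) ^ 2) ≤ (1 / 2) * Lv i * (δX + δU + δW) := by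
      apply mul_le_mul_of_nonneg_left _ (mul_nonneg (by norm_num) (hLv i))
      linarith
    simpa [hlindef] using le_trans hb hL
  exact htrans x hx w hw hmem
end
end

section
/- Let n ∈ ℕ, let L ∈ ℝ^{n×n} be symmetric positive definite, let c ∈ ℝ^n, and let δX ≥ 0. Then the ellipsoid E(c, L⁻²) is contained in the Euclidean closed ball of radius √δX centered at c if and only if the block matrix [[I_n, L],[L, δX·I_n]] is positive semidefinite. -/
open Matrix

noncomputable section

/-- Ellipsoid `E(c, P) = {x : (x−c)ᵀ P (x−c) ≤ 1}`. -/
def Ellip {n : ℕ} (c : Fin n → ℝ) (P : Matrix (Fin n) (Fin n) ℝ) : Set (Fin n → ℝ) :=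
  {x | (x - c) ⬝ᵥ P.mulVec (x - c) ≤ 1}

lemma eunorm_eq_sqrt_dot {k : ℕ} (v : Fin k → ℝ) : eunorm v = Real.sqrt (v ⬝ᵥ v) := by
  unfold eunorm dotProduct
  congr 1
  exact Finset.sum_congr rfl fun i _ => sq (v i)

lemma dot_self_nonneg {k : ℕ} (v : Fin k → ℝ) : 0 ≤ v ⬝ᵥ v :=
  Finset.sum_nonneg fun i _ => mul_self_nonneg (v i)

lemma dot_sym {n : ℕ} {L : Matrix (Fin n) (Fin n) ℝ} (hLs : Lᵀ = L)
    (a b : Fin n → ℝ) : a ⬝ᵥ L.mulVec b = b ⬝ᵥ L.mulVec a := by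
  rw [dotProduct_mulVec, dotProduct_comm, ← mulVec_transpose, hLs]

/-- The ellipsoid `E(c, L⁻²)` is inside the Euclidean closed ball of radius `√δX`
centered at `c` iff `[[I, L],[L, δX·I]] ⪰ 0`. -/
theorem ellipsoid_in_ball_iff {n : ℕ}
    (L : Matrix (Fin n) (Fin n) ℝ) (hL : L.PosDef) (c : Fin n → ℝ)
    (δX : ℝ) (hδX : 0 ≤ δX) :
    Ellip c (L ^ 2)⁻¹ ⊆ {x | eunorm (x - c) ≤ Real.sqrt δX} ↔
      (fromBlocks (1 : Matrix (Fin n) (Fin n) ℝ) L L (δX • (1 : Matrix (Fin n) (Fin n) ℝ))).PosSemidef := by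
  have hLs : Lᵀ = L := hL.1
  have hdet : IsUnit L.det := hL.det_pos.ne'.isUnit
  have hLL : L * L⁻¹ = 1 := mul_nonsing_inv L hdet
  have hLL' : L⁻¹ * L = 1 := nonsing_inv_mul L hdet
  have hinv : (L ^ 2)⁻¹ = L⁻¹ * L⁻¹ := by rw [sq, Matrix.mul_inv_rev]
  have hkey : ∀ w : Fin n → ℝ, (L.mulVec w) ⬝ᵥ (L ^ 2)⁻¹.mulVec (L.mulVec w) = w ⬝ᵥ w := by
    intro w
    have hone : L * (L⁻¹ * L⁻¹ * L) = 1 := by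
      rw [← Matrix.mul_assoc, ← Matrix.mul_assoc, hLL, Matrix.one_mul, hLL']
    rw [mulVec_mulVec, dotProduct_mulVec, vecMul_mulVec, hLs, hinv, hone]
    simp
  have hquad : ∀ u : Fin n → ℝ, (L.mulVec u) ⬝ᵥ (L.mulVec u) = u ⬝ᵥ (L ^ 2).mulVec u := by
    intro u
    rw [sq, ← mulVec_mulVec]
    exact (dot_sym hLs u (L.mulVec u)).symm
  constructor
  · intro hsub
    -- derive the Schur complement condition
    have key : ∀ u : Fin n → ℝ, u ⬝ᵥ (L ^ 2).mulVec u ≤ δX * (u ⬝ᵥ u) := by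
      intro u
      rcases eq_or_ne u 0 with rfl | hu
      · simp
      · obtain ⟨i, hi⟩ : ∃ i, u i ≠ 0 := by
          by_contra h
          push_neg at h
          exact hu (funext h)
        have hpos : 0 < u ⬝ᵥ u :=
          Finset.sum_pos' (fun j _ => mul_self_nonneg (u j))
            ⟨i, Finset.mem_univ i, mul_self_pos.2 hi⟩
        set t : ℝ := Real.sqrt (u ⬝ᵥ u) with ht
        have htpos : 0 < t := Real.sqrt_pos.2 hpos
        have ht2 : t * t = u ⬝ᵥ u := Real.mul_self_sqrt hpos.le
        set w : Fin n → ℝ := t⁻¹ • u with hw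
        have hww : w ⬝ᵥ w = 1 := by
          rw [hw, smul_dotProduct, dotProduct_smul, smul_eq_mul, smul_eq_mul, ← ht2]
          field_simp
        have hmem : c + L.mulVec w ∈ Ellip c (L ^ 2)⁻¹ := by
          simp only [Ellip, Set.mem_setOf_eq, add_sub_cancel_left]
          rw [hkey, hww]
        have := hsub hmem
        simp only [Set.mem_setOf_eq, add_sub_cancel_left] at this
        rw [eunorm_eq_sqrt_dot] at this
        have hle : (L.mulVec w) ⬝ᵥ (L.mulVec w) ≤ δX :=
          (Real.sqrt_le_sqrt_iff hδX).1 this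
        rw [hquad] at hle
        have hexp : w ⬝ᵥ (L ^ 2).mulVec w = (t⁻¹ * t⁻¹) * (u ⬝ᵥ (L ^ 2).mulVec u) := by
          rw [hw, smul_dotProduct, mulVec_smul, dotProduct_smul, smul_eq_mul, smul_eq_mul]
          ring
        rw [hexp] at hle
        have h2 : u ⬝ᵥ (L ^ 2).mulVec u ≤ δX * (t * t) := by
          have := mul_le_mul_of_nonneg_left hle (mul_pos htpos htpos).le
          calc u ⬝ᵥ (L ^ 2).mulVec u
              = (t * t) * ((t⁻¹ * t⁻¹) * (u ⬝ᵥ (L ^ 2).mulVec u)) := by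
                field_simp
            _ ≤ (t * t) * δX := this
            _ = δX * (t * t) := by ring
        rwa [ht2] at h2
    -- build the block PSD matrix
    refine posSemidef_iff_dotProduct_mulVec.mpr ⟨?_, ?_⟩
    · refine IsHermitian.fromBlocks isHermitian_one (by simpa using hLs) ?_
      unfold Matrix.IsHermitian
      simp
    · intro x
      set a : Fin n → ℝ := x ∘ Sum.inl with ha
      set b : Fin n → ℝ := x ∘ Sum.inr with hb
      have hx : x = Sum.elim a b := by funext i; cases i <;> rfl
      have hstar : star x = x := by funext i; exact star_trivial _
      rw [hstar, hx, fromBlocks_mulVec, dotProduct_block]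
      simp only [Sum.elim_comp_inl, Sum.elim_comp_inr, one_mulVec, smul_mulVec,
        one_mulVec, dotProduct_add, dotProduct_smul, smul_eq_mul]
      have hform : a ⬝ᵥ a + a ⬝ᵥ L.mulVec b + (b ⬝ᵥ L.mulVec a + δX * (b ⬝ᵥ b)) =
          (a + L.mulVec b) ⬝ᵥ (a + L.mulVec b) +
            (δX * (b ⬝ᵥ b) - b ⬝ᵥ (L ^ 2).mulVec b) := by
        rw [dotProduct_add, add_dotProduct, add_dotProduct, dot_sym hLs b a, hquad b,
          dotProduct_comm (L.mulVec b) a]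
        ring
      rw [hform]
      have := key b
      have := dot_self_nonneg (a + L.mulVec b)
      linarith
  · intro hPSD x hx
    -- extract the Schur complement condition from block PSD
    have key : ∀ u : Fin n → ℝ, u ⬝ᵥ (L ^ 2).mulVec u ≤ δX * (u ⬝ᵥ u) := by
      intro u
      have h := hPSD.dotProduct_mulVec_nonneg (Sum.elim (-(L.mulVec u)) u)
      have hstar : star (Sum.elim (-(L.mulVec u)) u) = Sum.elim (-(L.mulVec u)) u := by
        funext i; exact star_trivial _
      rw [hstar, fromBlocks_mulVec, dotProduct_block] at h
      simp only [Sum.elim_comp_inl, Sum.elim_comp_inr, one_mulVec, smul_mulVec,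
        dotProduct_add, dotProduct_smul, smul_eq_mul, mulVec_neg, dotProduct_neg,
        neg_dotProduct, add_neg_cancel, neg_add_cancel, dotProduct_zero] at h
      have h' : 0 ≤ -(u ⬝ᵥ (L ^ 2).mulVec u) + δX * (u ⬝ᵥ u) := by
        have hq := hquad u
        have hsym := dot_sym hLs u (L.mulVec u)
        -- h : 0 ≤ (-(L.mulVec u)) ⬝ᵥ 0-ish form; normalize
        nlinarith [h, hq, hsym]
      linarith
    -- show x is in the ball
    simp only [Ellip, Set.mem_setOf_eq] at hx
    set y : Fin n → ℝ := x - c with hy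
    set u : Fin n → ℝ := L⁻¹.mulVec y with hu
    have hyu : y = L.mulVec u := by
      rw [hu, mulVec_mulVec, hLL, one_mulVec]
    have h1 : u ⬝ᵥ u ≤ 1 := by
      rw [← hkey u, ← hyu]; exact hx
    have h2 : y ⬝ᵥ y ≤ δX := by
      rw [hyu, hquad]
      calc u ⬝ᵥ (L ^ 2).mulVec u ≤ δX * (u ⬝ᵥ u) := key u
        _ ≤ δX * 1 := mul_le_mul_of_nonneg_left h1 hδX
        _ = δX := mul_one δX
    simp only [Set.mem_setOf_eq]
    rw [eunorm_eq_sqrt_dot]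
    exact Real.sqrt_le_sqrt h2
end
end

section
/- Let L ∈ ℝ^{n×n} be symmetric positive definite, c, c₊ ∈ ℝ^n, let P₊ ∈ ℝ^{n×n} be symmetric positive definite, let M ∈ ℝ^{n×n} and b ∈ ℝ^n. Then the affine map x ↦ M x + b maps the ellipsoid E(c, L⁻²) into the ellipsoid E(c₊, P₊) if and only if there exists β ≥ 0 such that the block matrix [[β·I_n, 0, (M L)ᵀ],[0, 1 − β, (M c + b − c₊)ᵀ],[M L, M c + b − c₊, P₊⁻¹]] is positive semidefinite. -/
open Matrix

noncomputable section

/-- A vector as a single-row matrix. -/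
def rowV {m : ℕ} (v : Fin m → ℝ) : Matrix (Fin 1) (Fin m) ℝ := Matrix.of fun _ j => v j

/-- A vector as a single-column matrix. -/
def colV {m : ℕ} (v : Fin m → ℝ) : Matrix (Fin m) (Fin 1) ℝ := Matrix.of fun i _ => v i

/-- A scalar as a 1×1 matrix. -/
def sc (a : ℝ) : Matrix (Fin 1) (Fin 1) ℝ := Matrix.of fun _ _ => a

/-- 3×3 block matrix. -/
def block3 {n1 n2 n3 : Type*}
    (A11 : Matrix n1 n1 ℝ) (A12 : Matrix n1 n2 ℝ) (A13 : Matrix n1 n3 ℝ)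
    (A21 : Matrix n2 n1 ℝ) (A22 : Matrix n2 n2 ℝ) (A23 : Matrix n2 n3 ℝ)
    (A31 : Matrix n3 n1 ℝ) (A32 : Matrix n3 n2 ℝ) (A33 : Matrix n3 n3 ℝ) :
    Matrix ((n1 ⊕ n2) ⊕ n3) ((n1 ⊕ n2) ⊕ n3) ℝ :=
  fromBlocks (fromBlocks A11 A12 A21 A22) (fromRows A13 A23) (fromCols A31 A32) A33

lemma star_vec {m : Type*} (x : m → ℝ) : star x = x := funext fun _ => star_trivial _

lemma dot_transpose_mulVec {n m : Type*} [Fintype n] [Fintype m]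
    (A : Matrix n m ℝ) (u : m → ℝ) (v : n → ℝ) :
    u ⬝ᵥ Aᵀ *ᵥ v = (A *ᵥ u) ⬝ᵥ v := by
  rw [Matrix.mulVec_transpose, dotProduct_comm, ← Matrix.dotProduct_mulVec, dotProduct_comm]

lemma elim_add {m k : Type*} (a a' : m → ℝ) (b b' : k → ℝ) :
    Sum.elim a b + Sum.elim a' b' = Sum.elim (a + a') (b + b') := by
  funext i; cases i <;> rfl

/-- Abstract homogeneous S-lemma for a pair of quadratic functions. -/
theorem my_slemma {V : Type*} [AddCommGroup V] [Module ℝ V]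
    (f g : V → ℝ) (Bf Bg : V → V → ℝ)
    (hf : ∀ z₁ z₂ (r w : ℝ), f (r • z₁ + w • z₂) = r^2 * f z₁ + r * w * Bf z₁ z₂ + w^2 * f z₂)
    (hg : ∀ z₁ z₂ (r w : ℝ), g (r • z₁ + w • z₂) = r^2 * g z₁ + r * w * Bg z₁ z₂ + w^2 * g z₂)
    (z₀ : V) (hz₀ : 0 < g z₀)
    (H : ∀ z, 0 ≤ g z → 0 ≤ f z) :
    ∃ β : ℝ, 0 ≤ β ∧ ∀ z, β * g z ≤ f z := by
  have pair : ∀ z₁ z₂, 0 < g z₁ → g z₂ < 0 → f z₂ / g z₂ ≤ f z₁ / g z₁ := by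
    intro z₁ z₂ h1 h2
    set a := g z₁ with ha
    set b := g z₂ with hb
    set cg := Bg z₁ z₂ with hcg
    set cf := Bf z₁ z₂ with hcf
    have hΔ : 0 < cg^2 - 4*(a*b) := by nlinarith
    set s := Real.sqrt (cg^2 - 4*(a*b)) with hs
    have hs2 : s^2 = cg^2 - 4*(a*b) := Real.sq_sqrt hΔ.le
    have hspos : 0 < s := Real.sqrt_pos.mpr hΔ
    have hscg : |cg| < s := by
      refine lt_of_pow_lt_pow_left₀ 2 hspos.le ?_
      rw [sq_abs]; nlinarith
    have hcg1 : -cg < s := by have := neg_abs_le cg; linarith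
    have hcg2 : cg < s := by have := le_abs_self cg; linarith
    set r₁ := -cg - s with hr₁
    set r₂ := -cg + s with hr₂
    have hr1neg : r₁ < 0 := by rw [hr₁]; linarith
    have hr2pos : 0 < r₂ := by rw [hr₂]; linarith
    have hgz1 : g (r₁ • z₁ + (2*a) • z₂) = 0 := by rw [hg, hr₁]; linear_combination a * hs2
    have hgz2 : g (r₂ • z₁ + (2*a) • z₂) = 0 := by rw [hg, hr₂]; linear_combination a * hs2
    have hP1 : 0 ≤ r₁^2 * f z₁ + r₁ * (2*a) * cf + (2*a)^2 * f z₂ := by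
      have := H _ hgz1.ge; rwa [hf] at this
    have hP2 : 0 ≤ r₂^2 * f z₁ + r₂ * (2*a) * cf + (2*a)^2 * f z₂ := by
      have := H _ hgz2.ge; rwa [hf] at this
    have key : f z₁ * b ≤ f z₂ * a := by
      have hcomb : 0 ≤ r₂ * (r₁^2 * f z₁ + r₁ * (2*a) * cf + (2*a)^2 * f z₂)
          + (-r₁) * (r₂^2 * f z₁ + r₂ * (2*a) * cf + (2*a)^2 * f z₂) := by
        have h3 := mul_nonneg hr2pos.le hP1
        have h4 := mul_nonneg (neg_nonneg.mpr hr1neg.le) hP2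
        linarith
      have hrr : r₁ * r₂ = 4*(a*b) := by rw [hr₁, hr₂]; nlinarith
      have hexp : r₂ * (r₁^2 * f z₁ + r₁ * (2*a) * cf + (2*a)^2 * f z₂)
          + (-r₁) * (r₂^2 * f z₁ + r₂ * (2*a) * cf + (2*a)^2 * f z₂)
          = (r₂ - r₁) * ((2*a)^2 * f z₂ - (r₁*r₂) * f z₁) := by ring
      rw [hexp, hrr] at hcomb
      have hdiff : r₂ - r₁ = 2*s := by rw [hr₁, hr₂]; ring
      rw [hdiff] at hcomb
      have h2s : (0:ℝ) < 2*s := by linarith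
      have h5 : 0 ≤ (2*a)^2 * f z₂ - 4*(a*b) * f z₁ :=
        (mul_nonneg_iff_of_pos_left h2s).mp hcomb
      nlinarith [h5, h1]
    rw [div_le_iff_of_neg h2, div_mul_eq_mul_div, div_le_iff₀ h1]
    linarith
  set S : Set ℝ := insert 0 {r | ∃ z, g z < 0 ∧ r = f z / g z} with hS
  have hub : ∀ y ∈ S, y ≤ f z₀ / g z₀ := by
    rintro y (rfl | ⟨z, hz, rfl⟩)
    · exact div_nonneg (H z₀ hz₀.le) hz₀.le
    · exact pair z₀ z hz₀ hz
  have hbdd : BddAbove S := ⟨f z₀ / g z₀, hub⟩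
  have hne : S.Nonempty := ⟨0, Set.mem_insert _ _⟩
  refine ⟨sSup S, le_csSup hbdd (Set.mem_insert _ _), fun z => ?_⟩
  rcases lt_trichotomy (g z) 0 with hgz | hgz | hgz
  · have hmem : f z / g z ∈ S := Set.mem_insert_of_mem _ ⟨z, hgz, rfl⟩
    have := le_csSup hbdd hmem
    calc sSup S * g z ≤ (f z / g z) * g z := mul_le_mul_of_nonpos_right this hgz.le
    _ = f z := div_mul_cancel₀ _ hgz.ne
  · rw [hgz, mul_zero]; exact H z hgz.ge
  · have hle : sSup S ≤ f z / g z := by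
      apply csSup_le hne
      rintro y (rfl | ⟨z₂, hz₂, rfl⟩)
      · exact div_nonneg (H z hgz.le) hgz.le
      · exact pair z z₂ hgz hz₂
    calc sSup S * g z ≤ (f z / g z) * g z := mul_le_mul_of_nonneg_right hle hgz.le
    _ = f z := div_mul_cancel₀ _ hgz.ne'

lemma block3_psd_iff {n : ℕ} (Pp : Matrix (Fin n) (Fin n) ℝ) (hPp : Pp.PosDef)
    (A : Matrix (Fin n) (Fin n) ℝ) (d : Fin n → ℝ) (β : ℝ) :
    (block3 (β • (1 : Matrix (Fin n) (Fin n) ℝ)) 0 Aᵀ 0 (sc (1 - β)) (rowV d)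
        A (colV d) Pp⁻¹).PosSemidef ↔
      ∀ (u : Fin n → ℝ) (t : ℝ),
        (A *ᵥ u + t • d) ⬝ᵥ Pp *ᵥ (A *ᵥ u + t • d) ≤ β * (u ⬝ᵥ u) + (1 - β) * t^2 := by
  have hdet : IsUnit Pp.det := hPp.det_pos.ne'.isUnit
  have hPpT : Ppᵀ = Pp := hPp.1
  have hPpinvT : (Pp⁻¹)ᵀ = Pp⁻¹ := by rw [Matrix.transpose_nonsing_inv, hPpT]
  have hinv_mul : ∀ w : Fin n → ℝ, Pp⁻¹ *ᵥ (Pp *ᵥ w) = w := by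
    intro w; rw [Matrix.mulVec_mulVec, Matrix.nonsing_inv_mul _ hdet, Matrix.one_mulVec]
  have hquad : ∀ (u v : Fin n → ℝ) (t : ℝ),
      (Sum.elim (Sum.elim u (fun _ : Fin 1 => t)) v) ⬝ᵥ
        (block3 (β • (1 : Matrix (Fin n) (Fin n) ℝ)) 0 Aᵀ 0 (sc (1 - β)) (rowV d)
          A (colV d) Pp⁻¹) *ᵥ (Sum.elim (Sum.elim u (fun _ : Fin 1 => t)) v)
      = β * (u ⬝ᵥ u) + (1 - β) * t^2 + 2 * ((A *ᵥ u + t • d) ⬝ᵥ v) + v ⬝ᵥ Pp⁻¹ *ᵥ v := by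
    intro u v t
    set τ : Fin 1 → ℝ := fun _ => t with hτ
    have h1 : (fromBlocks (β • (1 : Matrix (Fin n) (Fin n) ℝ)) 0 0 (sc (1-β))) *ᵥ
        (Sum.elim u τ) = Sum.elim (β • u) (fun _ : Fin 1 => (1-β)*t) := by
      rw [Matrix.fromBlocks_mulVec]
      simp only [Sum.elim_comp_inl, Sum.elim_comp_inr, Matrix.zero_mulVec, add_zero, zero_add,
        Matrix.smul_mulVec, Matrix.one_mulVec]
      funext i
      cases i with
      | inl i => rfl
      | inr i => simp [sc, Matrix.mulVec, dotProduct, hτ]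
    have h2 : (fromRows Aᵀ (rowV d)) *ᵥ v = Sum.elim (Aᵀ *ᵥ v) (fun _ : Fin 1 => d ⬝ᵥ v) := by
      rw [Matrix.fromRows_mulVec]
      congr 1
    have h3 : (fromCols A (colV d)) *ᵥ (Sum.elim u τ) = A *ᵥ u + t • d := by
      rw [Matrix.fromCols_mulVec_sumElim]
      congr 1
      funext i; simp [colV, Matrix.mulVec, dotProduct, hτ, mul_comm]
    rw [block3, Matrix.fromBlocks_mulVec]
    simp only [Sum.elim_comp_inl, Sum.elim_comp_inr]
    rw [h1, h2, h3, elim_add, sumElim_dotProduct_sumElim,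
      sumElim_dotProduct_sumElim]
    have hτdot : ∀ y : ℝ, τ ⬝ᵥ (fun _ : Fin 1 => y) = t * y := by
      intro y; simp [dotProduct, hτ]
    simp only [dotProduct_add, add_dotProduct, dotProduct_smul, smul_dotProduct, smul_eq_mul]
    rw [hτdot ((1 - β) * t), hτdot (d ⬝ᵥ v), dot_transpose_mulVec,
      dotProduct_comm v (A *ᵥ u), dotProduct_comm v d]
    ring
  constructor
  · rintro hpsd u t
    have hx := (posSemidef_iff_dotProduct_mulVec.mp hpsd).2
    have := hx (Sum.elim (Sum.elim u (fun _ : Fin 1 => t)) (-(Pp *ᵥ (A *ᵥ u + t • d))))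
    rw [_root_.star_vec, hquad] at this
    obtain ⟨w, hw⟩ : ∃ w, w = A *ᵥ u + t • d := ⟨_, rfl⟩
    rw [← hw] at this ⊢
    rw [Matrix.mulVec_neg, hinv_mul] at this
    have e1 : w ⬝ᵥ -(Pp *ᵥ w) = -(w ⬝ᵥ Pp *ᵥ w) := dotProduct_neg _ _
    have e2 : (-(Pp *ᵥ w)) ⬝ᵥ (-w) = (Pp *ᵥ w) ⬝ᵥ w := by
      rw [neg_dotProduct, dotProduct_neg, neg_neg]
    have e3 : (Pp *ᵥ w) ⬝ᵥ w = w ⬝ᵥ Pp *ᵥ w := dotProduct_comm _ _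
    rw [e1, e2, e3] at this
    linarith
  · intro h
    refine posSemidef_iff_dotProduct_mulVec.mpr ⟨?_, ?_⟩
    · rw [block3, Matrix.isHermitian_fromBlocks_iff]
      refine ⟨?_, ?_, ?_, hPp.1.inv⟩
      · rw [Matrix.isHermitian_fromBlocks_iff]
        refine ⟨?_, ?_, ?_, ?_⟩
        · show (β • (1 : Matrix (Fin n) (Fin n) ℝ)).IsHermitian
          simp [Matrix.IsHermitian]
        · simp
        · simp
        · show (sc (1-β)).IsHermitian
          ext i j
          simp [sc]
      · rw [Matrix.conjTranspose_fromRows_eq_fromCols_conjTranspose]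
        have e1 : (Aᵀ)ᴴ = A := by
          rw [Matrix.conjTranspose_eq_transpose_of_trivial, Matrix.transpose_transpose]
        have e2 : (rowV d)ᴴ = colV d := by ext i j; simp [rowV, colV]
        rw [e1, e2]
      · rw [Matrix.conjTranspose_fromCols_eq_fromRows_conjTranspose]
        have e1 : Aᴴ = Aᵀ := Matrix.conjTranspose_eq_transpose_of_trivial _
        have e2 : (colV d)ᴴ = rowV d := by ext i j; simp [rowV, colV]
        rw [e1, e2]
    · intro x
      have hx : x = Sum.elim (Sum.elim (fun i => x (.inl (.inl i)))
          (fun _ : Fin 1 => x (.inl (.inr 0)))) (fun i => x (.inr i)) := by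
        funext i
        rcases i with (i | j) | i
        · rfl
        · have hj : j = 0 := Subsingleton.elim _ _
          rw [hj]; rfl
        · rfl
      rw [_root_.star_vec, hx, hquad]
      obtain ⟨u, hu⟩ : ∃ u, u = (fun i => x (.inl (.inl i))) := ⟨_, rfl⟩
      obtain ⟨t, ht⟩ : ∃ t, t = x (.inl (.inr 0)) := ⟨_, rfl⟩
      obtain ⟨v, hv⟩ : ∃ v, v = (fun i => x (.inr i)) := ⟨_, rfl⟩
      rw [← hu, ← ht, ← hv]
      obtain ⟨w, hw⟩ : ∃ w, w = A *ᵥ u + t • d := ⟨_, rfl⟩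
      rw [← hw]
      have hkey : 0 ≤ (v + Pp *ᵥ w) ⬝ᵥ Pp⁻¹ *ᵥ (v + Pp *ᵥ w) := by
        have := hPp.inv.posSemidef.dotProduct_mulVec_nonneg (v + Pp *ᵥ w)
        rwa [_root_.star_vec] at this
      have hexp : (v + Pp *ᵥ w) ⬝ᵥ Pp⁻¹ *ᵥ (v + Pp *ᵥ w)
          = v ⬝ᵥ Pp⁻¹ *ᵥ v + 2 * (w ⬝ᵥ v) + w ⬝ᵥ Pp *ᵥ w := by
        rw [Matrix.mulVec_add, hinv_mul]
        simp only [dotProduct_add, add_dotProduct]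
        have e1 : v ⬝ᵥ w = w ⬝ᵥ v := dotProduct_comm _ _
        have e2 : (Pp *ᵥ w) ⬝ᵥ (Pp⁻¹ *ᵥ v) = w ⬝ᵥ v := by
          rw [← hPpinvT, dot_transpose_mulVec, hinv_mul]
        have e3 : (Pp *ᵥ w) ⬝ᵥ w = w ⬝ᵥ Pp *ᵥ w := dotProduct_comm _ _
        rw [e1, e2, e3]
        ring
      rw [hexp] at hkey
      have h2 := h u t
      rw [← hw] at h2
      linarith

/-- The affine map `x ↦ M x + b` maps `E(c, L⁻²)` into `E(c₊, P₊)` iff there exists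
`β ≥ 0` with `[[βI, 0, (ML)ᵀ],[0, 1 − β, (Mc + b − c₊)ᵀ],[ML, Mc + b − c₊, P₊⁻¹]] ⪰ 0`. -/
theorem affine_ellipsoid_map_iff {n : ℕ}
    (L : Matrix (Fin n) (Fin n) ℝ) (hL : L.PosDef)
    (c cp : Fin n → ℝ) (Pp : Matrix (Fin n) (Fin n) ℝ) (hPp : Pp.PosDef)
    (M : Matrix (Fin n) (Fin n) ℝ) (b : Fin n → ℝ) :
    (∀ x ∈ Ellip c (L ^ 2)⁻¹, M.mulVec x + b ∈ Ellip cp Pp) ↔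
      ∃ β : ℝ, 0 ≤ β ∧
        (block3 (β • (1 : Matrix (Fin n) (Fin n) ℝ)) 0 (M * L)ᵀ
                0 (sc (1 - β)) (rowV (M.mulVec c + b - cp))
                (M * L) (colV (M.mulVec c + b - cp)) Pp⁻¹).PosSemidef := by
  have hLdet : IsUnit L.det := hL.det_pos.ne'.isUnit
  have hLT : Lᵀ = L := hL.1
  have hLinvT : (L⁻¹)ᵀ = L⁻¹ := by rw [Matrix.transpose_nonsing_inv, hLT]
  have hLinv_mul : L⁻¹ * L = 1 := Matrix.nonsing_inv_mul _ hLdet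
  have hLmul_inv : L * L⁻¹ = 1 := Matrix.mul_nonsing_inv _ hLdet
  set A := M * L with hA
  set d := M.mulVec c + b - cp with hd
  have hmem : ∀ y : Fin n → ℝ, y ⬝ᵥ (L ^ 2)⁻¹ *ᵥ y = (L⁻¹ *ᵥ y) ⬝ᵥ (L⁻¹ *ᵥ y) := by
    intro y
    have h := dot_transpose_mulVec L⁻¹ y (L⁻¹ *ᵥ y)
    rw [hLinvT] at h
    calc y ⬝ᵥ (L ^ 2)⁻¹ *ᵥ y = y ⬝ᵥ L⁻¹ *ᵥ (L⁻¹ *ᵥ y) := by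
          rw [pow_two, Matrix.mul_inv_rev, ← Matrix.mulVec_mulVec]
    _ = (L⁻¹ *ᵥ y) ⬝ᵥ (L⁻¹ *ᵥ y) := h
  have stepA : (∀ x ∈ Ellip c (L ^ 2)⁻¹, M.mulVec x + b ∈ Ellip cp Pp) ↔
      ∀ u : Fin n → ℝ, u ⬝ᵥ u ≤ 1 → (A *ᵥ u + d) ⬝ᵥ Pp *ᵥ (A *ᵥ u + d) ≤ 1 := by
    constructor
    · intro hmain u hu
      have hx : c + L *ᵥ u ∈ Ellip c (L ^ 2)⁻¹ := by
        show (c + L *ᵥ u - c) ⬝ᵥ (L ^ 2)⁻¹ *ᵥ (c + L *ᵥ u - c) ≤ 1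
        rw [add_sub_cancel_left, hmem, Matrix.mulVec_mulVec, hLinv_mul, Matrix.one_mulVec]
        exact hu
      have hmm := hmain _ hx
      have heq : M *ᵥ (c + L *ᵥ u) + b - cp = A *ᵥ u + d := by
        rw [Matrix.mulVec_add, Matrix.mulVec_mulVec, hA, hd]
        abel
      have : (M *ᵥ (c + L *ᵥ u) + b - cp) ⬝ᵥ Pp *ᵥ (M *ᵥ (c + L *ᵥ u) + b - cp) ≤ 1 := hmm
      rwa [heq] at this
    · intro hq x hx
      have hu : (L⁻¹ *ᵥ (x - c)) ⬝ᵥ (L⁻¹ *ᵥ (x - c)) ≤ 1 := by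
        rw [← hmem]; exact hx
      have hq2 := hq _ hu
      have heq : A *ᵥ (L⁻¹ *ᵥ (x - c)) + d = M *ᵥ x + b - cp := by
        rw [Matrix.mulVec_mulVec, hA, mul_assoc, hLmul_inv, mul_one, hd, Matrix.mulVec_sub]
        abel
      show (M *ᵥ x + b - cp) ⬝ᵥ Pp *ᵥ (M *ᵥ x + b - cp) ≤ 1
      rwa [heq] at hq2
  rw [stepA]
  constructor
  · intro hq
    -- the S-procedure direction
    have hwlin : ∀ (u₁ u₂ : Fin n → ℝ) (t₁ t₂ r s : ℝ),
        A *ᵥ (r • u₁ + s • u₂) + (r * t₁ + s * t₂) • d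
          = r • (A *ᵥ u₁ + t₁ • d) + s • (A *ᵥ u₂ + t₂ • d) := by
      intro u₁ u₂ t₁ t₂ r s
      rw [Matrix.mulVec_add, Matrix.mulVec_smul, Matrix.mulVec_smul]
      module
    have hdotexp : ∀ (w₁ w₂ : Fin n → ℝ) (r s : ℝ),
        (r • w₁ + s • w₂) ⬝ᵥ Pp *ᵥ (r • w₁ + s • w₂)
          = r^2 * (w₁ ⬝ᵥ Pp *ᵥ w₁) + r * s * (w₁ ⬝ᵥ Pp *ᵥ w₂ + w₂ ⬝ᵥ Pp *ᵥ w₁)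
            + s^2 * (w₂ ⬝ᵥ Pp *ᵥ w₂) := by
      intro w₁ w₂ r s
      simp only [Matrix.mulVec_add, Matrix.mulVec_smul, dotProduct_add, add_dotProduct,
        dotProduct_smul, smul_dotProduct, smul_eq_mul]
      ring
    obtain ⟨β, hβ0, hβ⟩ := my_slemma
      (V := (Fin n → ℝ) × ℝ)
      (fun z => z.2^2 - (A *ᵥ z.1 + z.2 • d) ⬝ᵥ Pp *ᵥ (A *ᵥ z.1 + z.2 • d))
      (fun z => z.2^2 - z.1 ⬝ᵥ z.1)
      (fun z₁ z₂ => 2*(z₁.2*z₂.2) - ((A *ᵥ z₁.1 + z₁.2 • d) ⬝ᵥ Pp *ᵥ (A *ᵥ z₂.1 + z₂.2 • d)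
          + (A *ᵥ z₂.1 + z₂.2 • d) ⬝ᵥ Pp *ᵥ (A *ᵥ z₁.1 + z₁.2 • d)))
      (fun z₁ z₂ => 2*(z₁.2*z₂.2) - (z₁.1 ⬝ᵥ z₂.1 + z₂.1 ⬝ᵥ z₁.1))
      (by
        rintro ⟨u₁, t₁⟩ ⟨u₂, t₂⟩ r s
        show (r*t₁+s*t₂)^2 - (A *ᵥ (r • u₁ + s • u₂) + (r*t₁+s*t₂) • d) ⬝ᵥ
            Pp *ᵥ (A *ᵥ (r • u₁ + s • u₂) + (r*t₁+s*t₂) • d) = _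
        rw [hwlin, hdotexp]
        ring)
      (by
        rintro ⟨u₁, t₁⟩ ⟨u₂, t₂⟩ r s
        show (r*t₁+s*t₂)^2 - (r • u₁ + s • u₂) ⬝ᵥ (r • u₁ + s • u₂) = _
        simp only [dotProduct_add, add_dotProduct, dotProduct_smul, smul_dotProduct, smul_eq_mul]
        ring)
      ((0 : Fin n → ℝ), (1 : ℝ))
      (by
        show (0:ℝ) < 1^2 - (0 : Fin n → ℝ) ⬝ᵥ (0 : Fin n → ℝ)
        simp)
      (by
        rintro ⟨u, t⟩ hz
        simp only at hz ⊢
        by_cases ht : t = 0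
        · subst ht
          have h1 : u ⬝ᵥ u ≤ 0 := by nlinarith [hz]
          have h2 : (0:ℝ) ≤ u ⬝ᵥ u := by
            simp only [dotProduct]
            exact Finset.sum_nonneg fun i _ => mul_self_nonneg _
          have h0 : u = 0 := dotProduct_self_eq_zero.mp (le_antisymm h1 h2)
          subst h0
          simp
        · have ht2 : (0:ℝ) < t^2 := by positivity
          have hu' : (t⁻¹ • u) ⬝ᵥ (t⁻¹ • u) ≤ 1 := by
            have he : (t⁻¹ • u) ⬝ᵥ (t⁻¹ • u) = (u ⬝ᵥ u) / t^2 := by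
              simp only [smul_dotProduct, dotProduct_smul, smul_eq_mul]
              rw [eq_div_iff ht2.ne']
              have : t⁻¹ * (t⁻¹ * (u ⬝ᵥ u)) * t ^ 2 = (t⁻¹ * t)^2 * (u ⬝ᵥ u) := by ring
              rw [this, inv_mul_cancel₀ ht, one_pow, one_mul]
            rw [he, div_le_one ht2]
            linarith
          have hq' := hq _ hu'
          have hscale : A *ᵥ u + t • d = t • (A *ᵥ (t⁻¹ • u) + d) := by
            rw [Matrix.mulVec_smul, smul_add, smul_smul, mul_inv_cancel₀ ht, one_smul]
          have hsc2 : (t • (A *ᵥ (t⁻¹ • u) + d)) ⬝ᵥ Pp *ᵥ (t • (A *ᵥ (t⁻¹ • u) + d))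
              = t^2 * ((A *ᵥ (t⁻¹ • u) + d) ⬝ᵥ Pp *ᵥ (A *ᵥ (t⁻¹ • u) + d)) := by
            simp only [Matrix.mulVec_add, Matrix.mulVec_smul, dotProduct_add, add_dotProduct,
              dotProduct_smul, smul_dotProduct, smul_eq_mul]
            ring
          rw [hscale, hsc2]
          nlinarith)
    refine ⟨β, hβ0, (block3_psd_iff Pp hPp A d β).mpr fun u t => ?_⟩
    have := hβ (u, t)
    simp only at this
    nlinarith [this]
  · rintro ⟨β, hβ0, hpsd⟩ u hu
    have h1 := (block3_psd_iff Pp hPp A d β).mp hpsd u 1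
    rw [one_smul] at h1
    nlinarith [h1, mul_nonneg hβ0 (sub_nonneg.mpr hu)]
end
end

section
/- Consider the discrete-time system x⁺ = f(x,u,w) with f : ℝ^n × ℝ^m × ℝ^d → ℝ^n, input set 𝒰 = ∩_{k=1}^{N_u} {u : ‖U_k u‖ ≤ 1} (U_k ∈ ℝ^{p_k×m}), disturbance set 𝒲 = conv{w_1,…,w_{N_w}} ⊆ ℝ^d with 0 ∈ 𝒲. Let c, c₊ ∈ ℝ^n, let P₊ be symmetric positive definite, let ū ∈ 𝒰, and let A ∈ ℝ^{n×n}, B ∈ ℝ^{n×m}, E ∈ ℝ^{n×d}, g ∈ ℝ^n be such that, for a componentwise nonnegative vector 𝐋 ∈ ℝ^n and all (x,u,w) and each component i: |f_i(x,u,w) − (Ax + Bu + Ew + g)_i| ≤ (1/2)𝐋_i(‖x − c‖² + ‖u − ū‖² + ‖w‖²). Suppose there exist a symmetric positive definite L ∈ ℝ^{n×n}, F ∈ ℝ^{m×n}, l ∈ ℝ^m, and scalars δX, δU, φ, β_{ij}, τ_k ≥ 0 such that, with μ = g + Ac + Bl − c₊, δW = max_j ‖w_j‖², r² = δX + δU +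 δW, and V_1,…,V_{2^n} the vertices of the hyperrectangle H(0, (1/2)𝐋 r²), the following matrices are positive semidefinite: (16) [[I_n, L],[L, δX·I_n]]; (17) [[φ I_n, 0, Fᵀ],[0, δU − φ, (l − ū)ᵀ],[F, l − ū, I_m]]; (18) for all i ∈ {1,…,2^n}, j ∈ {1,…,N_w}: [[β_{ij} I_n, 0, (AL + BF)ᵀ],[0, 1 − β_{ij}, (μ + V_i + E w_j)ᵀ],[AL + BF, μ + V_i + E w_j, P₊⁻¹]]; (19) for all k ∈ {1,…,N_u}: [[τ_k I_n, 0, Fᵀ U_kᵀ],[0, 1 − τ_k, lᵀ U_kᵀ],[U_k F, U_k l, I_{p_k}]]. Then, setting P = L⁻², K = F L⁻¹, and κ(x) = K(x − c) + l, one has: for all x ∈ E(c, P) and all w ∈ 𝒲, f(x, κ(x), w) ∈ E(c₊, P₊), and moreover κ(x) ∈ 𝒰 for all x ∈ E(c, P). -/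
open Matrix Set
open scoped Pointwise

noncomputable section

section AuxLemmas

lemma eunorm_sq {k : ℕ} (v : Fin k → ℝ) : eunorm v ^ 2 = v ⬝ᵥ v := by
  rw [eunorm, Real.sq_sqrt (by positivity)]
  simp [dotProduct, sq]

lemma eunorm_le_one {k : ℕ} (v : Fin k → ℝ) (h : v ⬝ᵥ v ≤ 1) : eunorm v ≤ 1 := by
  rw [eunorm, Real.sqrt_le_one]
  simpa [dotProduct, sq] using h

lemma dot_symm {k : ℕ} {P : Matrix (Fin k) (Fin k) ℝ} (hP : Pᵀ = P) (u v : Fin k → ℝ) :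
    u ⬝ᵥ P.mulVec v = (P.mulVec u) ⬝ᵥ v := by
  rw [dotProduct_mulVec, ← hP, vecMul_transpose, hP]

lemma quad_convexOn {k : ℕ} {P : Matrix (Fin k) (Fin k) ℝ} (hP : P.PosSemidef) :
    ConvexOn ℝ Set.univ (fun y : Fin k → ℝ => y ⬝ᵥ P.mulVec y) := by
  have hPt : Pᵀ = P := hP.1
  refine ⟨convex_univ, fun x _ y _ a b ha hb hab => ?_⟩
  have hcross := hP.dotProduct_mulVec_nonneg (x - y)
  have hx := hP.dotProduct_mulVec_nonneg x
  have hy := hP.dotProduct_mulVec_nonneg y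
  have hsym : x ⬝ᵥ P.mulVec y = y ⬝ᵥ P.mulVec x := by
    rw [dot_symm hPt, dotProduct_comm]
  simp only [mulVec_add, mulVec_smul, dotProduct_add, add_dotProduct, smul_dotProduct,
    dotProduct_smul, smul_eq_mul, mulVec_sub, dotProduct_sub, sub_dotProduct,
    Pi.star_def, star_trivial] at *
  obtain rfl : b = 1 - a := by linarith
  nlinarith [mul_nonneg (mul_nonneg ha hb) hcross]

lemma block2_bound {k : ℕ} {δ : ℝ} {L : Matrix (Fin k) (Fin k) ℝ} (hLt : Lᵀ = L)
    (hpsd : (fromBlocks (1 : Matrix (Fin k) (Fin k) ℝ) L L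
      (δ • (1 : Matrix (Fin k) (Fin k) ℝ))).PosSemidef) (z : Fin k → ℝ) :
    (L.mulVec z) ⬝ᵥ (L.mulVec z) ≤ δ * (z ⬝ᵥ z) := by
  have h := hpsd.dotProduct_mulVec_nonneg (Sum.elim (-(L.mulVec z)) z)
  simp only [Pi.star_def, star_trivial, fromBlocks_mulVec, sumElim_dotProduct_sumElim,
    one_mulVec, mulVec_neg, smul_mulVec, dotProduct_add, neg_dotProduct, dotProduct_neg,
    smul_dotProduct, dotProduct_smul, smul_eq_mul, neg_neg, Sum.elim_comp_inl,
    Sum.elim_comp_inr] at h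
  have hs : z ⬝ᵥ L.mulVec (L.mulVec z) = (L.mulVec z) ⬝ᵥ (L.mulVec z) := by
    rw [dot_symm hLt]
  rw [hs] at h
  linarith

lemma block3_bound {n1 n3 : ℕ} {α b : ℝ} {C : Matrix (Fin n3) (Fin n1) ℝ}
    {v : Fin n3 → ℝ} {R S : Matrix (Fin n3) (Fin n3) ℝ}
    (hRS : ∀ u, R.mulVec (S.mulVec u) = u)
    (hpsd : (block3 (α • (1 : Matrix (Fin n1) (Fin n1) ℝ)) 0 Cᵀ
        0 (sc b) (rowV v) C (colV v) R).PosSemidef)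
    (z : Fin n1 → ℝ) :
    (C.mulVec z + v) ⬝ᵥ S.mulVec (C.mulVec z + v) ≤ α * (z ⬝ᵥ z) + b := by
  set y := C.mulVec z + v with hy
  set s := -(S.mulVec y) with hsdef
  have h := hpsd.dotProduct_mulVec_nonneg (Sum.elim (Sum.elim z (fun _ => (1:ℝ))) s)
  simp only [block3, Pi.star_def, star_trivial, fromBlocks_mulVec, fromRows_mulVec,
    fromCols_mulVec_sumElim, sumElim_dotProduct_sumElim, dotProduct_add, add_dotProduct,
    Sum.elim_comp_inl, Sum.elim_comp_inr, one_mulVec, smul_mulVec, zero_mulVec,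
    mulVec_zero, add_zero, zero_add, dotProduct_smul, smul_dotProduct, smul_eq_mul,
    Pi.add_apply, Sum.elim_inl, Sum.elim_inr] at h
  have e1 : ((fun _ : Fin 1 => (1:ℝ)) ⬝ᵥ sc b *ᵥ fun _ => (1:ℝ)) = b := by
    simp [sc, mulVec, dotProduct]
  have e2 : z ⬝ᵥ Cᵀ *ᵥ s = (C *ᵥ z) ⬝ᵥ s := by rw [dotProduct_mulVec, vecMul_transpose]
  have e3 : ((fun _ : Fin 1 => (1:ℝ)) ⬝ᵥ rowV v *ᵥ s) = v ⬝ᵥ s := by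
    simp [rowV, mulVec, dotProduct]
  have e4 : (s ⬝ᵥ colV v *ᵥ fun _ => (1:ℝ)) = s ⬝ᵥ v := by
    simp [colV, mulVec, dotProduct]
  have e5 : s ⬝ᵥ R *ᵥ s = y ⬝ᵥ S *ᵥ y := by
    rw [hsdef, neg_dotProduct, mulVec_neg, dotProduct_neg, neg_neg, hRS, dotProduct_comm]
  have e7 : (C *ᵥ z) ⬝ᵥ s = y ⬝ᵥ s - v ⬝ᵥ s := by rw [hy, add_dotProduct]; ring
  have e8 : s ⬝ᵥ (C *ᵥ z) = s ⬝ᵥ y - s ⬝ᵥ v := by rw [hy, dotProduct_add]; ring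
  have e9 : y ⬝ᵥ s = -(y ⬝ᵥ S *ᵥ y) := by rw [hsdef, dotProduct_neg]
  have e10 : s ⬝ᵥ y = -(y ⬝ᵥ S *ᵥ y) := by rw [dotProduct_comm, e9]
  rw [e1, e2, e3, e4, e5, e7, e8, e9, e10] at h
  linarith

end AuxLemmas

/-- **Theorem 2 (feasibility of the local transition controller via LMIs)**:
under the linearization-error bound around `(c, ū, 0)`, if the LMIs (16)–(19) are
feasible, then the affine controller `κ(x) = F L⁻¹ (x − c) + l` maps every
`x ∈ E(c, L⁻²)` into `E(c₊, P₊)` for every disturbance in `𝒲 = conv{w₁,…,w_{N_w}}`,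
and its inputs belong to the input set `𝒰 = ∩ₖ {u : ‖Uₖ u‖ ≤ 1}`. -/
theorem local_transition_feasibility {n m d Nw Nu : ℕ}
    (f : (Fin n → ℝ) → (Fin m → ℝ) → (Fin d → ℝ) → (Fin n → ℝ))
    (p : Fin Nu → ℕ) (Umat : (k : Fin Nu) → Matrix (Fin (p k)) (Fin m) ℝ)
    (wv : Fin Nw → (Fin d → ℝ))
    (hW0 : (0 : Fin d → ℝ) ∈ convexHull ℝ (Set.range wv))
    (c cp : Fin n → ℝ)
    (Pp : Matrix (Fin n) (Fin n) ℝ) (hPp : Pp.PosDef)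
    (ubar : Fin m → ℝ) (hubar : ∀ k, eunorm ((Umat k).mulVec ubar) ≤ 1)
    (A : Matrix (Fin n) (Fin n) ℝ) (B : Matrix (Fin n) (Fin m) ℝ)
    (E : Matrix (Fin n) (Fin d) ℝ) (g : Fin n → ℝ)
    (Lv : Fin n → ℝ) (hLv : ∀ i, 0 ≤ Lv i)
    (hlin : ∀ x u w, ∀ i,
      |f x u w i - (A.mulVec x + B.mulVec u + E.mulVec w + g) i| ≤
        (1 / 2) * Lv i * (eunorm (x - c) ^ 2 + eunorm (u - ubar) ^ 2 + eunorm w ^ 2))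
    (L : Matrix (Fin n) (Fin n) ℝ) (hL : L.PosDef)
    (F : Matrix (Fin m) (Fin n) ℝ) (l : Fin m → ℝ)
    (δX δU δW : ℝ) (hδX : 0 ≤ δX) (hδU : 0 ≤ δU)
    (hδW : IsGreatest (Set.range fun j => eunorm (wv j) ^ 2) δW)
    (φ : ℝ) (hφ : 0 ≤ φ)
    (β : (Fin n → Bool) → Fin Nw → ℝ) (hβ : ∀ σ j, 0 ≤ β σ j)
    (τ : Fin Nu → ℝ) (hτ : ∀ k, 0 ≤ τ k)
    (μ : Fin n → ℝ) (hμ : μ = g + A.mulVec c + B.mulVec l - cp)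
    (r2 : ℝ) (hr2 : r2 = δX + δU + δW)
    (V : (Fin n → Bool) → (Fin n → ℝ))
    (hV : ∀ σ i, V σ i = (if σ i then 1 else -1) * ((1 / 2) * Lv i * r2))
    (h16 : (fromBlocks (1 : Matrix (Fin n) (Fin n) ℝ) L L
      (δX • (1 : Matrix (Fin n) (Fin n) ℝ))).PosSemidef)
    (h17 : (block3 (φ • (1 : Matrix (Fin n) (Fin n) ℝ)) 0 Fᵀ
        0 (sc (δU - φ)) (rowV (l - ubar))
        F (colV (l - ubar)) (1 : Matrix (Fin m) (Fin m) ℝ)).PosSemidef)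
    (h18 : ∀ (σ : Fin n → Bool) (j : Fin Nw),
      (block3 (β σ j • (1 : Matrix (Fin n) (Fin n) ℝ)) 0 (A * L + B * F)ᵀ
        0 (sc (1 - β σ j)) (rowV (μ + V σ + E.mulVec (wv j)))
        (A * L + B * F) (colV (μ + V σ + E.mulVec (wv j))) Pp⁻¹).PosSemidef)
    (h19 : ∀ k : Fin Nu,
      (block3 (τ k • (1 : Matrix (Fin n) (Fin n) ℝ)) 0 (Umat k * F)ᵀ
        0 (sc (1 - τ k)) (rowV ((Umat k).mulVec l))
        (Umat k * F) (colV ((Umat k).mulVec l))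
        (1 : Matrix (Fin (p k)) (Fin (p k)) ℝ)).PosSemidef)
    (κ : (Fin n → ℝ) → (Fin m → ℝ))
    (hκ : ∀ x, κ x = (F * L⁻¹).mulVec (x - c) + l) :
    ∀ x ∈ Ellip c (L ^ 2)⁻¹,
      (∀ w ∈ convexHull ℝ (Set.range wv), f x (κ x) w ∈ Ellip cp Pp) ∧
        (∀ k, eunorm ((Umat k).mulVec (κ x)) ≤ 1) := by
  intro x hx
  have hLt : Lᵀ = L := hL.1
  have hdetL : IsUnit L.det := hL.det_pos.ne'.isUnit
  have hinvt : L⁻¹ᵀ = L⁻¹ := by rw [Matrix.transpose_nonsing_inv, hLt]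
  set z : Fin n → ℝ := L⁻¹.mulVec (x - c) with hzdef
  have hxz : L.mulVec z = x - c := by
    rw [hzdef, mulVec_mulVec, Matrix.mul_nonsing_inv _ hdetL, one_mulVec]
  have hzz0 : 0 ≤ z ⬝ᵥ z := by rw [← eunorm_sq]; positivity
  have hz1 : z ⬝ᵥ z ≤ 1 := by
    have e : (x - c) ⬝ᵥ (L ^ 2)⁻¹.mulVec (x - c) = z ⬝ᵥ z := by
      rw [pow_two, Matrix.mul_inv_rev, ← mulVec_mulVec, dot_symm hinvt]
    rw [← e]; exact hx
  have hX : eunorm (x - c) ^ 2 ≤ δX := by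
    rw [eunorm_sq, ← hxz]
    exact le_trans (block2_bound hLt h16 z) (mul_le_of_le_one_right hδX hz1)
  have hκz : κ x = F.mulVec z + l := by rw [hκ, ← Matrix.mulVec_mulVec, ← hzdef]
  have hRS1 : ∀ u0 : Fin m → ℝ, (1 : Matrix (Fin m) (Fin m) ℝ).mulVec
      ((1 : Matrix (Fin m) (Fin m) ℝ).mulVec u0) = u0 := by simp
  have hU : eunorm (κ x - ubar) ^ 2 ≤ δU := by
    have h17' := block3_bound hRS1 h17 z
    rw [one_mulVec] at h17'
    have harr : κ x - ubar = F.mulVec z + (l - ubar) := by rw [hκz]; abel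
    rw [eunorm_sq, harr]
    have : φ * (z ⬝ᵥ z) ≤ φ := mul_le_of_le_one_right hφ hz1
    linarith
  have δW0 : 0 ≤ δW := by
    obtain ⟨j, hj⟩ := hδW.1
    rw [← hj]; positivity
  have hWb : ∀ w ∈ convexHull ℝ (Set.range wv), eunorm w ^ 2 ≤ δW := by
    intro w hw
    have hcx : ConvexOn ℝ Set.univ (fun y : Fin d → ℝ => y ⬝ᵥ y) := by
      simpa [one_mulVec] using quad_convexOn (Matrix.PosSemidef.one (n := Fin d) (R := ℝ))
    obtain ⟨y, ⟨j, rfl⟩, hy⟩ := hcx.exists_ge_of_mem_convexHull (Set.subset_univ _) hw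
    rw [eunorm_sq]
    refine le_trans hy ?_
    rw [← eunorm_sq]
    exact hδW.2 ⟨j, rfl⟩
  constructor
  · intro w hw
    have hw2 : eunorm w ^ 2 ≤ δW := hWb w hw
    set ev : Fin n → ℝ :=
      fun i => f x (κ x) w i - (A.mulVec x + B.mulVec (κ x) + E.mulVec w + g) i with hev
    have hevb : ∀ i, |ev i| ≤ 1 / 2 * Lv i * r2 := by
      intro i
      refine le_trans (hlin x (κ x) w i) ?_
      have hsum : eunorm (x - c) ^ 2 + eunorm (κ x - ubar) ^ 2 + eunorm w ^ 2 ≤ r2 := by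
        rw [hr2]; linarith
      have h12 : (0:ℝ) ≤ 1 / 2 * Lv i := by linarith [hLv i]
      exact mul_le_mul_of_nonneg_left hsum h12
    have hhnn : ∀ i, (0:ℝ) ≤ 1 / 2 * Lv i * r2 := fun i => (abs_nonneg _).trans (hevb i)
    have hmemE : ev ∈ convexHull ℝ (Set.range V) := by
      have h1 : ev ∈ convexHull ℝ (Set.univ.pi
          fun i => ({-(1 / 2 * Lv i * r2), 1 / 2 * Lv i * r2} : Set ℝ)) := by
        apply mem_convexHull_pi
        intro i _
        rw [convexHull_pair, segment_eq_Icc (by linarith [hhnn i])]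
        exact ⟨(abs_le.1 (hevb i)).1, (abs_le.1 (hevb i)).2⟩
      refine convexHull_mono ?_ h1
      intro s hs
      refine ⟨fun i => if s i = 1 / 2 * Lv i * r2 then true else false, ?_⟩
      funext i
      rw [hV]
      by_cases hc : s i = 1 / 2 * Lv i * r2
      · simp [hc]
      · rcases hs i (Set.mem_univ i) with h | h
        · rw [if_neg hc]
          simp only [Bool.false_eq_true, if_false, h]
          ring
        · exact absurd h hc
    have hprod : (ev, w) ∈ convexHull ℝ ((Set.range V) ×ˢ (Set.range wv)) := by
      rw [convexHull_prod]; exact ⟨hmemE, hw⟩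
    set a0 : Fin n → ℝ := (A * L + B * F).mulVec z + μ with ha0
    set Tl : ((Fin n → ℝ) × (Fin d → ℝ)) →ₗ[ℝ] (Fin n → ℝ) :=
      (LinearMap.fst ℝ _ _) + E.mulVecLin.comp (LinearMap.snd ℝ _ _) with hTl
    have hT : ∀ q : (Fin n → ℝ) × (Fin d → ℝ),
        a0 + q.1 + E.mulVec q.2 = Tl (q -ᵥ 0) +ᵥ (a0 + (0 : (Fin n → ℝ) × (Fin d → ℝ)).1
          + E.mulVec (0 : (Fin n → ℝ) × (Fin d → ℝ)).2) := by
      intro q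
      simp only [hTl, vsub_eq_sub, sub_zero, LinearMap.add_apply, LinearMap.fst_apply,
        LinearMap.coe_comp, Function.comp_apply, LinearMap.snd_apply,
        Matrix.mulVecLin_apply, vadd_eq_add, Prod.fst_zero, Prod.snd_zero, mulVec_zero,
        add_zero]
      abel
    set T : ((Fin n → ℝ) × (Fin d → ℝ)) →ᵃ[ℝ] (Fin n → ℝ) :=
      AffineMap.mk' (fun q => a0 + q.1 + E.mulVec q.2) Tl 0 hT with hTdef
    have hG : ConvexOn ℝ Set.univ (fun q : (Fin n → ℝ) × (Fin d → ℝ) =>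
        (a0 + q.1 + E.mulVec q.2) ⬝ᵥ Pp.mulVec (a0 + q.1 + E.mulVec q.2)) := by
      have hcomp := (quad_convexOn hPp.posSemidef).comp_affineMap T
      rw [Set.preimage_univ] at hcomp
      exact hcomp
    obtain ⟨q0, hq0, hle⟩ := hG.exists_ge_of_mem_convexHull (Set.subset_univ _) hprod
    obtain ⟨⟨σ, hσ⟩, ⟨j, hj⟩⟩ := hq0
    have hRS : ∀ u0 : Fin n → ℝ, Pp⁻¹.mulVec (Pp.mulVec u0) = u0 := by
      intro u0
      rw [mulVec_mulVec, Matrix.nonsing_inv_mul _ hPp.det_pos.ne'.isUnit, one_mulVec]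
    have h18' := block3_bound hRS (h18 σ j) z
    have hvert : (a0 + V σ + E.mulVec (wv j)) ⬝ᵥ Pp.mulVec (a0 + V σ + E.mulVec (wv j)) ≤ 1 := by
      have harr : a0 + V σ + E.mulVec (wv j)
          = (A * L + B * F).mulVec z + (μ + V σ + E.mulVec (wv j)) := by
        rw [ha0]; abel
      rw [harr]
      refine le_trans h18' ?_
      nlinarith [hβ σ j, hz1, hzz0]
    have hxx : x = c + L.mulVec z := by rw [hxz]; abel
    have hkey : (A * L + B * F).mulVec z + μ + E.mulVec w
        = A.mulVec x + B.mulVec (κ x) + E.mulVec w + g - cp := by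
      rw [hμ, hκz]
      nth_rewrite 1 [hxx]
      simp only [mulVec_add, add_mulVec, mulVec_mulVec]
      abel
    have hfeq : f x (κ x) w - cp = a0 + ev + E.mulVec w := by
      have h2 : a0 + ev + E.mulVec w = ((A * L + B * F).mulVec z + μ + E.mulVec w) + ev := by
        rw [ha0]; abel
      rw [h2, hkey]
      funext i
      simp only [hev, Pi.sub_apply, Pi.add_apply]
      ring
    show (f x (κ x) w - cp) ⬝ᵥ Pp.mulVec (f x (κ x) w - cp) ≤ 1
    rw [hfeq]
    refine le_trans hle ?_
    rw [hσ, hj] at hvert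
    exact hvert
  · intro k
    have hRS1k : ∀ u0 : Fin (p k) → ℝ, (1 : Matrix (Fin (p k)) (Fin (p k)) ℝ).mulVec
        ((1 : Matrix (Fin (p k)) (Fin (p k)) ℝ).mulVec u0) = u0 := by simp
    have h19' := block3_bound hRS1k (h19 k) z
    rw [one_mulVec] at h19'
    apply eunorm_le_one
    have harr : (Umat k).mulVec (κ x) = (Umat k * F).mulVec z + (Umat k).mulVec l := by
      rw [hκz, mulVec_add, mulVec_mulVec]
    rw [harr]
    have : τ k * (z ⬝ᵥ z) ≤ τ k := mul_le_of_le_one_right (hτ k) hz1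
    linarith
end
end
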